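/- arXiv:2007.09392 — 5 statements merged into one kernel-verified Lean document; each statement's English description precedes it below -/
import Mathlib

section
/- Let d ≥ 1 be an integer, (M, ρ) a metric space, and μ a Borel measure on M with μ(B(x,α)) ≤ c₀ α^d for every x ∈ M and α > 0, where B(x,α) = {y : ρ(x,y) ≤ α}. Let κ ≥ d+1, n ≥ 1, x ∈ M, and suppose G : M → ℂ is measurable with |G(y)| ≤ c n^d / (1 + n ρ(x,y))^κ for every y ∈ M. Then for every 1 ≤ p ≤ ∞, ‖G‖_{L_p(μ)} ≤ C n^{d(1−1/p)}, where C depends only on d, p, κ, c and c₀. -/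
open MeasureTheory ENNReal

open MeasureTheory ENNReal

def annuli {M : Type} [MetricSpace M] (x : M) (n : ℝ) : ℕ → Set M
  | 0 => Metric.closedBall x (1 / n)
  | (m + 1) => Metric.closedBall x (2 ^ (m + 1) / n) \ Metric.closedBall x (2 ^ m / n)

set_option maxHeartbeats 1000000 in
lemma aux_integral (d : ℕ) (κ c₀ : ℝ) (hκ : (d : ℝ) + 1 ≤ κ) (hc₀ : 0 ≤ c₀)
    (M : Type) [MetricSpace M] [MeasurableSpace M] [BorelSpace M] (μ : Measure M)
    (hμ : ∀ (x : M) (α : ℝ), 0 < α → μ (Metric.closedBall x α) ≤ ENNReal.ofReal (c₀ * α ^ d))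
    (n : ℝ) (hn : 1 ≤ n) (x : M) :
    ∫⁻ y, ENNReal.ofReal ((1 + n * dist x y) ^ (-κ)) ∂μ ≤
      ENNReal.ofReal (c₀ * 2 ^ (d + 2) * n ^ (-(d : ℝ))) := by
  have hn0 : (0:ℝ) < n := lt_of_lt_of_le one_pos hn
  have hκ0 : (0:ℝ) ≤ κ := le_trans (by positivity) hκ
  set f : M → ℝ≥0∞ := fun y => ENNReal.ofReal ((1 + n * dist x y) ^ (-κ)) with hf
  set B : ℕ → Set M := annuli x n with hB
  have hcover : (Set.univ : Set M) = ⋃ j, B j := by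
    refine Set.eq_of_subset_of_subset (fun y _ => ?_) (Set.subset_univ _)
    by_cases h0 : dist x y ≤ 1 / n
    · exact Set.mem_iUnion.2 ⟨0, by simpa [hB, annuli, Metric.mem_closedBall, dist_comm] using h0⟩
    · have hex : ∃ k : ℕ, dist x y ≤ 2 ^ k / n := by
        obtain ⟨k, hk⟩ := pow_unbounded_of_one_lt (n * dist x y) (one_lt_two (α := ℝ))
        exact ⟨k, by rw [le_div_iff₀ hn0]; nlinarith [hk]⟩
      set k := Nat.find hex with hkdef
      have hk1 : dist x y ≤ 2 ^ k / n := Nat.find_spec hex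
      have hkne : k ≠ 0 := by
        intro h
        rw [h] at hk1
        simp only [pow_zero] at hk1
        exact h0 hk1
      obtain ⟨m, hm⟩ := Nat.exists_eq_succ_of_ne_zero hkne
      have hk2 : ¬ dist x y ≤ 2 ^ m / n := Nat.find_min hex (by omega)
      refine Set.mem_iUnion.2 ⟨m + 1, ?_⟩
      simp only [hB, annuli, Set.mem_diff, Metric.mem_closedBall, dist_comm y x]
      exact ⟨by simpa [hm] using hk1, hk2⟩
  have hint : ∫⁻ y, f y ∂μ ≤ ∑' j, ∫⁻ y in B j, f y ∂μ := by
    rw [← setLIntegral_univ, hcover]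
    exact lintegral_iUnion_le _ _
  -- bound term 0
  have h0 : ∫⁻ y in B 0, f y ∂μ ≤ ENNReal.ofReal (c₀ * n ^ (-(d:ℝ))) := by
    have hfle : ∀ y ∈ B 0, f y ≤ (1 : ℝ≥0∞) := by
      intro y _
      rw [hf]
      have h1 : (1 + n * dist x y) ^ (-κ) ≤ 1 := Real.rpow_le_one_of_one_le_of_nonpos
        (by nlinarith [dist_nonneg (x := x) (y := y)]) (by linarith)
      exact le_trans (ENNReal.ofReal_le_ofReal h1) (by simp)
    calc ∫⁻ y in B 0, f y ∂μ ≤ ∫⁻ _ in B 0, (1:ℝ≥0∞) ∂μ :=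
          setLIntegral_mono measurable_const hfle
      _ = μ (Metric.closedBall x (1 / n)) := by simp [hB, annuli]
      _ ≤ ENNReal.ofReal (c₀ * (1 / n) ^ d) := hμ x _ (by positivity)
      _ = ENNReal.ofReal (c₀ * n ^ (-(d:ℝ))) := by
          rw [Real.rpow_neg hn0.le, Real.rpow_natCast]
          congr 1
          rw [one_div, inv_pow]
  -- bound terms j+1
  have hsucc : ∀ m : ℕ, ∫⁻ y in B (m + 1), f y ∂μ ≤
      ENNReal.ofReal (c₀ * 2 ^ d * n ^ (-(d:ℝ))) * (2 : ℝ≥0∞)⁻¹ ^ m := by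
    intro m
    have hfle : ∀ y ∈ B (m + 1), f y ≤ ENNReal.ofReal ((2:ℝ) ^ (-(m:ℝ) * κ)) := by
      intro y hy
      simp only [hB, annuli, Set.mem_diff, Metric.mem_closedBall, dist_comm y x] at hy
      have h2 : (2:ℝ) ^ m / n < dist x y := not_le.1 hy.2
      have hbase : (2:ℝ) ^ (m:ℝ) ≤ 1 + n * dist x y := by
        have : (2:ℝ) ^ m ≤ n * dist x y := by
          rw [div_lt_iff₀ hn0] at h2; nlinarith
        rw [Real.rpow_natCast]; linarith
      rw [hf]
      apply ENNReal.ofReal_le_ofReal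
      calc (1 + n * dist x y) ^ (-κ) ≤ ((2:ℝ) ^ (m:ℝ)) ^ (-κ) := by
            apply Real.rpow_le_rpow_of_nonpos (by positivity) hbase (by linarith)
        _ = (2:ℝ) ^ (-(m:ℝ) * κ) := by
            rw [← Real.rpow_mul (by norm_num)]; ring_nf
    calc ∫⁻ y in B (m + 1), f y ∂μ
        ≤ ∫⁻ _ in B (m + 1), ENNReal.ofReal ((2:ℝ) ^ (-(m:ℝ) * κ)) ∂μ :=
          setLIntegral_mono measurable_const hfle
      _ = ENNReal.ofReal ((2:ℝ) ^ (-(m:ℝ) * κ)) * μ (B (m + 1)) := by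
          rw [setLIntegral_const]
      _ ≤ ENNReal.ofReal ((2:ℝ) ^ (-(m:ℝ) * κ)) *
            ENNReal.ofReal (c₀ * (2 ^ (m + 1) / n) ^ d) := by
          gcongr
          refine le_trans (le_of_eq (by rw [hB]; rfl)) (le_trans (measure_mono (Set.diff_subset (s := Metric.closedBall x (2 ^ (m + 1) / n)) (t := Metric.closedBall x (2 ^ m / n)))) (hμ x _ (by positivity)))
      _ ≤ ENNReal.ofReal (c₀ * 2 ^ d * n ^ (-(d:ℝ))) * (2 : ℝ≥0∞)⁻¹ ^ m := by
          rw [← ENNReal.ofReal_mul (by positivity)]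
          have h2m : ((2 : ℝ≥0∞)⁻¹) ^ m = ENNReal.ofReal ((2:ℝ)⁻¹ ^ m) := by
            rw [ENNReal.ofReal_pow (by norm_num)]
            congr 1
            rw [ENNReal.ofReal_inv_of_pos (by norm_num)]
            norm_num
          rw [h2m, ← ENNReal.ofReal_mul (by positivity)]
          apply ENNReal.ofReal_le_ofReal
          -- real inequality
          have key : (2:ℝ) ^ (-(m:ℝ) * κ) * (2:ℝ) ^ (((m:ℝ) + 1) * d) ≤
              (2:ℝ) ^ ((d:ℝ) - m) := by
            rw [← Real.rpow_add (by norm_num)]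
            apply Real.rpow_le_rpow_of_exponent_le one_le_two
            have : (m:ℝ) * ((d:ℝ) + 1) ≤ (m:ℝ) * κ :=
              mul_le_mul_of_nonneg_left hκ (Nat.cast_nonneg m)
            nlinarith
          have hsplit : c₀ * (2 ^ (m + 1) / n) ^ d =
              c₀ * ((2:ℝ) ^ (((m:ℝ) + 1) * d) * n ^ (-(d:ℝ))) := by
            rw [div_pow, ← Real.rpow_natCast ((2:ℝ) ^ (m+1)) d,
              ← Real.rpow_natCast (2:ℝ) (m+1), ← Real.rpow_mul (by norm_num)]
            rw [Real.rpow_neg hn0.le, Real.rpow_natCast]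
            push_cast
            ring_nf
          rw [hsplit]
          have hfin : (2:ℝ) ^ (-(m:ℝ) * κ) * (c₀ * ((2:ℝ) ^ (((m:ℝ) + 1) * d) * n ^ (-(d:ℝ))))
              = c₀ * n ^ (-(d:ℝ)) * ((2:ℝ) ^ (-(m:ℝ) * κ) * (2:ℝ) ^ (((m:ℝ) + 1) * d)) := by
            ring
          rw [hfin]
          have h2dm : (2:ℝ) ^ ((d:ℝ) - (m:ℝ)) = 2 ^ d * (2:ℝ)⁻¹ ^ m := by
            rw [sub_eq_add_neg, Real.rpow_add (by norm_num), Real.rpow_natCast,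
              Real.rpow_neg (by norm_num), Real.rpow_natCast, inv_pow]
          calc c₀ * n ^ (-(d:ℝ)) * ((2:ℝ) ^ (-(m:ℝ) * κ) * (2:ℝ) ^ (((m:ℝ) + 1) * d))
              ≤ c₀ * n ^ (-(d:ℝ)) * (2:ℝ) ^ ((d:ℝ) - m) := by
                apply mul_le_mul_of_nonneg_left key (by positivity)
            _ = c₀ * 2 ^ d * n ^ (-(d:ℝ)) * (2:ℝ)⁻¹ ^ m := by rw [h2dm]; ring
  -- sum up
  have hsum : ∑' j, ∫⁻ y in B j, f y ∂μ ≤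
      ENNReal.ofReal (c₀ * n ^ (-(d:ℝ))) + ENNReal.ofReal (c₀ * 2 ^ d * n ^ (-(d:ℝ))) * 2 := by
    rw [tsum_eq_zero_add' ENNReal.summable]
    refine add_le_add h0 ?_
    calc ∑' m, ∫⁻ y in B (m + 1), f y ∂μ
        ≤ ∑' m : ℕ, ENNReal.ofReal (c₀ * 2 ^ d * n ^ (-(d:ℝ))) * (2 : ℝ≥0∞)⁻¹ ^ m :=
          ENNReal.tsum_le_tsum hsucc
      _ = ENNReal.ofReal (c₀ * 2 ^ d * n ^ (-(d:ℝ))) * (1 - 2⁻¹)⁻¹ := by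
          rw [ENNReal.tsum_mul_left, ENNReal.tsum_geometric]
      _ = ENNReal.ofReal (c₀ * 2 ^ d * n ^ (-(d:ℝ))) * 2 := by
          rw [ENNReal.one_sub_inv_two, inv_inv]
  refine le_trans hint (le_trans hsum ?_)
  have : (2:ℝ≥0∞) = ENNReal.ofReal 2 := by norm_num
  rw [this, ← ENNReal.ofReal_mul (by positivity), ← ENNReal.ofReal_add (by positivity) (by positivity)]
  apply ENNReal.ofReal_le_ofReal
  have hnd : (0:ℝ) ≤ n ^ (-(d:ℝ)) := Real.rpow_nonneg hn0.le _
  have h1 : c₀ * n ^ (-(d:ℝ)) + c₀ * 2 ^ d * n ^ (-(d:ℝ)) * 2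
      = c₀ * (1 + 2 ^ (d+1)) * n ^ (-(d:ℝ)) := by ring
  rw [h1]
  have h2 : (1:ℝ) + 2 ^ (d+1) ≤ 2 ^ (d+2) := by
    have : (1:ℝ) ≤ 2 ^ (d+1) := one_le_pow₀ one_le_two
    rw [pow_succ 2 (d+1)]
    nlinarith
  gcongr

set_option maxHeartbeats 1000000 in
/-- `L_p`-norm estimate for a localized kernel: if `μ(B(x,α)) ≤ c₀ α^d`
and `|G(y)| ≤ c n^d / (1 + n ρ(x,y))^κ` with `κ ≥ d+1`, then
`‖G‖_{L_p(μ)} ≤ C n^{d(1−1/p)}` with `C` depending only on `d, p, κ, c, c₀`. -/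
theorem localized_kernel_Lp_norm_bound
    (d : ℕ) (hd : 1 ≤ d) (p : ℝ≥0∞) (hp : 1 ≤ p)
    (κ c c₀ : ℝ) (hκ : (d : ℝ) + 1 ≤ κ) (hc : 0 ≤ c) (hc₀ : 0 ≤ c₀) :
    ∃ C : ℝ, 0 < C ∧
      ∀ (M : Type) [MetricSpace M] [MeasurableSpace M] [BorelSpace M]
        (μ : Measure M),
        (∀ (x : M) (α : ℝ), 0 < α →
            μ (Metric.closedBall x α) ≤ ENNReal.ofReal (c₀ * α ^ d)) →
        ∀ (n : ℝ), 1 ≤ n →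
        ∀ (x : M) (G : M → ℂ), Measurable G →
        (∀ y : M, ‖G y‖ ≤ c * n ^ d / (1 + n * dist x y) ^ κ) →
        eLpNorm G p μ ≤ ENNReal.ofReal (C * n ^ ((d : ℝ) * (1 - 1 / p.toReal))) := by
  have hκ0 : (0:ℝ) ≤ κ := le_trans (by positivity) hκ
  set K : ℝ := max 1 (c₀ * 2 ^ (d + 2)) with hKdef
  have hK1 : (1:ℝ) ≤ K := le_max_left _ _
  refine ⟨(c + 1) * K, by nlinarith, ?_⟩
  intro M _ _ _ μ hμ n hn x G hG hGle
  have hn0 : (0:ℝ) < n := lt_of_lt_of_le one_pos hn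
  have hnd : (0:ℝ) ≤ n ^ d := by positivity
  have hcK : c * n ^ d ≤ (c + 1) * K * n ^ d := by
    have h : c ≤ (c + 1) * K := by nlinarith [mul_nonneg hc (sub_nonneg.2 hK1)]
    exact mul_le_mul_of_nonneg_right h hnd
  by_cases hptop : p = ∞
  · subst hptop
    rw [eLpNorm_exponent_top]
    have hb : ∀ᵐ y ∂μ, ‖G y‖ ≤ c * n ^ d := by
      refine ae_of_all _ fun y => ?_
      have hS1 : (1:ℝ) ≤ 1 + n * dist x y := by nlinarith [dist_nonneg (x := x) (y := y)]
      have hpow : (1:ℝ) ≤ (1 + n * dist x y) ^ κ := Real.one_le_rpow hS1 hκ0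
      calc ‖G y‖ = ‖G y‖ := rfl
        _ ≤ c * n ^ d / (1 + n * dist x y) ^ κ := hGle y
        _ ≤ c * n ^ d := by
            rw [div_le_iff₀ (by linarith)]
            nlinarith [mul_nonneg (mul_nonneg hc hnd) (sub_nonneg.2 hpow)]
    refine le_trans (eLpNormEssSup_le_of_ae_bound hb) (ENNReal.ofReal_le_ofReal ?_)
    have : (⊤ : ℝ≥0∞).toReal = 0 := rfl
    rw [this]
    norm_num
    exact hcK
  · have hp0 : p ≠ 0 := ne_of_gt (lt_of_lt_of_le one_pos hp)
    set q := p.toReal with hqdef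
    have hq1 : 1 ≤ q := by
      rw [hqdef, ← ENNReal.toReal_one]
      exact ENNReal.toReal_mono hptop hp
    have hq0 : (0:ℝ) < q := lt_of_lt_of_le one_pos hq1
    rw [eLpNorm_eq_lintegral_rpow_enorm_toReal hp0 hptop]
    have hpt : ∀ y : M, ((‖G y‖₊ : ℝ≥0∞)) ^ q ≤
        ENNReal.ofReal (c * n ^ d) ^ q * ENNReal.ofReal ((1 + n * dist x y) ^ (-κ)) := by
      intro y
      have hS1 : (1:ℝ) ≤ 1 + n * dist x y := by nlinarith [dist_nonneg (x := x) (y := y)]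
      have hS0 : (0:ℝ) < 1 + n * dist x y := by linarith
      have habs : ((‖G y‖₊ : ℝ≥0∞)) = ENNReal.ofReal (‖G y‖) := by
        exact (ofReal_norm _).symm
      rw [habs]
      have h1 : ‖G y‖ ^ q ≤ (c * n ^ d) ^ q * (1 + n * dist x y) ^ (-κ) := by
        have h2 : ‖G y‖ ^ q ≤ (c * n ^ d / (1 + n * dist x y) ^ κ) ^ q :=
          Real.rpow_le_rpow (norm_nonneg _) (hGle y) hq0.le
        refine h2.trans ?_
        rw [Real.div_rpow (by positivity) (by positivity)]
        have hSS : ((1 + n * dist x y) ^ κ) ^ q = (1 + n * dist x y) ^ (κ * q) :=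
          (Real.rpow_mul hS0.le κ q).symm
        rw [hSS, div_eq_mul_inv, ← Real.rpow_neg hS0.le]
        have h3 : (1 + n * dist x y) ^ (-(κ * q)) ≤ (1 + n * dist x y) ^ (-κ) := by
          apply Real.rpow_le_rpow_of_exponent_le hS1
          nlinarith
        have h4 : (0:ℝ) ≤ (c * n ^ d) ^ q := by positivity
        nlinarith [mul_nonneg h4 (Real.rpow_nonneg hS0.le (-(κ * q)))]
      calc ENNReal.ofReal (‖G y‖) ^ q
          = ENNReal.ofReal (‖G y‖ ^ q) :=
            ENNReal.ofReal_rpow_of_nonneg (norm_nonneg _) hq0.le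
        _ ≤ ENNReal.ofReal ((c * n ^ d) ^ q * (1 + n * dist x y) ^ (-κ)) :=
            ENNReal.ofReal_le_ofReal h1
        _ = ENNReal.ofReal ((c * n ^ d) ^ q) * ENNReal.ofReal ((1 + n * dist x y) ^ (-κ)) :=
            ENNReal.ofReal_mul (by positivity)
        _ = ENNReal.ofReal (c * n ^ d) ^ q * ENNReal.ofReal ((1 + n * dist x y) ^ (-κ)) := by
            rw [ENNReal.ofReal_rpow_of_nonneg (by positivity) hq0.le]
    have hconst_ne : ENNReal.ofReal (c * n ^ d) ^ q ≠ ⊤ :=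
      ENNReal.rpow_ne_top_of_nonneg hq0.le ENNReal.ofReal_ne_top
    calc (∫⁻ y, ((‖G y‖₊ : ℝ≥0∞)) ^ q ∂μ) ^ (1 / q)
        ≤ (∫⁻ y, ENNReal.ofReal (c * n ^ d) ^ q *
            ENNReal.ofReal ((1 + n * dist x y) ^ (-κ)) ∂μ) ^ (1 / q) :=
          ENNReal.rpow_le_rpow (lintegral_mono hpt) (by positivity)
      _ = (ENNReal.ofReal (c * n ^ d) ^ q *
            ∫⁻ y, ENNReal.ofReal ((1 + n * dist x y) ^ (-κ)) ∂μ) ^ (1 / q) := by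
          rw [lintegral_const_mul' _ _ hconst_ne]
      _ ≤ (ENNReal.ofReal (c * n ^ d) ^ q *
            ENNReal.ofReal (c₀ * 2 ^ (d + 2) * n ^ (-(d:ℝ)))) ^ (1 / q) := by
          gcongr
          exact aux_integral d κ c₀ hκ hc₀ M μ hμ n hn x
      _ = ENNReal.ofReal (c * n ^ d) *
            ENNReal.ofReal (c₀ * 2 ^ (d + 2) * n ^ (-(d:ℝ))) ^ (1 / q) := by
          rw [ENNReal.mul_rpow_of_nonneg _ _ (by positivity), ← ENNReal.rpow_mul,
            mul_one_div, div_self hq0.ne', ENNReal.rpow_one]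
      _ ≤ ENNReal.ofReal ((c + 1) * K * n ^ ((d:ℝ) * (1 - 1 / q))) := by
          rw [ENNReal.ofReal_rpow_of_nonneg (by positivity) (by positivity),
            ← ENNReal.ofReal_mul (by positivity)]
          apply ENNReal.ofReal_le_ofReal
          have hA : (0:ℝ) ≤ c₀ * 2 ^ (d + 2) := by positivity
          have hsplit : (c₀ * 2 ^ (d + 2) * n ^ (-(d:ℝ))) ^ (1 / q) =
              (c₀ * 2 ^ (d + 2)) ^ (1 / q) * n ^ (-(d:ℝ) * (1 / q)) := by
            rw [Real.mul_rpow hA (Real.rpow_nonneg hn0.le _), ← Real.rpow_mul hn0.le]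
          have hAK : (c₀ * 2 ^ (d + 2)) ^ (1 / q) ≤ K := by
            rcases le_total (c₀ * 2 ^ (d + 2)) 1 with h | h
            · exact le_trans (Real.rpow_le_one hA h (by positivity)) hK1
            · have h1' : (c₀ * 2 ^ (d + 2)) ^ (1 / q) ≤ (c₀ * 2 ^ (d + 2)) ^ (1:ℝ) :=
                Real.rpow_le_rpow_of_exponent_le h (by rw [div_le_one hq0]; exact hq1)
              rw [Real.rpow_one] at h1'
              exact h1'.trans (le_max_right _ _)
          rw [hsplit]
          have hexp : n ^ ((d:ℝ) * (1 - 1 / q)) = n ^ d * n ^ (-(d:ℝ) * (1 / q)) := by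
            rw [← Real.rpow_natCast n d, ← Real.rpow_add hn0]
            congr 1
            ring
          rw [hexp]
          have hr : (0:ℝ) ≤ n ^ (-(d:ℝ) * (1 / q)) := Real.rpow_nonneg hn0.le _
          have h5 : (0:ℝ) ≤ (c₀ * 2 ^ (d + 2)) ^ (1 / q) := Real.rpow_nonneg hA _
          have heq : c * n ^ d * ((c₀ * 2 ^ (d + 2)) ^ (1 / q) * n ^ (-(d:ℝ) * (1 / q)))
              = (c * (c₀ * 2 ^ (d + 2)) ^ (1 / q)) * (n ^ d * n ^ (-(d:ℝ) * (1 / q))) := by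
            ring
          rw [heq]
          apply mul_le_mul_of_nonneg_right _ (mul_nonneg hnd hr)
          nlinarith [mul_le_mul_of_nonneg_left hAK hc]
end

section
/- Let (M, ρ) be a metric space of diameter at most R < ∞, let d ≥ 1 be an integer, n ≥ 1, and let x₁,…,x_N ∈ M and w₁,…,w_N ≥ 0 be weights such that for every x₀ ∈ M, every β ≥ 0 and every α ≥ 1/n one has Σ_{i : β < ρ(x₀,x_i) ≤ β+α} w_i ≤ c₁ ((β+α)^d − β^d), and Σ_{i : ρ(x₀,x_i) ≤ α} w_i ≤ c₁ α^d. Then there exists a constant C depending only on d, c₁ and R such that for every real ℓ ≥ n, sup_{x ∈ M} Σ_{i=1}^N w_i · ℓ^d / (1 + ℓ ρ(x, x_i))^{d+1} ≤ C (ℓ/n)^d. -/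
open MeasureTheory

lemma sum_inv_sq_le (K : ℕ) :
    ∑ k ∈ Finset.range K, (1 : ℝ) / ((k : ℝ) + 1) ^ 2 ≤ 2 - 2 / ((K : ℝ) + 1) := by
  induction K with
  | zero => norm_num
  | succ K ih =>
      rw [Finset.sum_range_succ]
      have h1 : (0:ℝ) < (K:ℝ) + 1 := by positivity
      have h2 : (0:ℝ) < (K:ℝ) + 2 := by positivity
      have key : (1 : ℝ) / ((K : ℝ) + 1) ^ 2 ≤ 2 / ((K:ℝ)+1) - 2/((K:ℝ)+2) := by
        rw [div_sub_div _ _ (ne_of_gt h1) (ne_of_gt h2)]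
        rw [div_le_div_iff₀ (by positivity) (by positivity)]
        nlinarith
      push_cast
      have e : ((K:ℝ)+1+1) = (K:ℝ)+2 := by ring
      rw [e]
      linarith

lemma pow_sub_pow_le' (d : ℕ) (a b : ℝ) (hb : 0 ≤ b) (hba : b ≤ a) :
    a ^ d - b ^ d ≤ (d : ℝ) * (a - b) * a ^ (d - 1) := by
  have ha : 0 ≤ a := hb.trans hba
  rw [← geom_sum₂_mul a b d]
  have hS : (∑ i ∈ Finset.range d, a ^ i * b ^ (d - 1 - i)) ≤ (d:ℝ) * a ^ (d-1) := by
    calc (∑ i ∈ Finset.range d, a ^ i * b ^ (d - 1 - i))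
        ≤ ∑ i ∈ Finset.range d, a ^ (d-1) := by
          apply Finset.sum_le_sum
          intro i hi
          rw [Finset.mem_range] at hi
          calc a ^ i * b ^ (d - 1 - i) ≤ a ^ i * a ^ (d - 1 - i) := by
                apply mul_le_mul_of_nonneg_left (pow_le_pow_left₀ hb hba _) (by positivity)
            _ = a ^ (i + (d - 1 - i)) := (pow_add a i _).symm
            _ = a ^ (d - 1) := by congr 1; omega
      _ = (d:ℝ) * a ^ (d-1) := by rw [Finset.sum_const, Finset.card_range, nsmul_eq_mul]
  calc (∑ i ∈ Finset.range d, a ^ i * b ^ (d - 1 - i)) * (a - b)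
      ≤ ((d:ℝ) * a ^ (d-1)) * (a - b) := by
        apply mul_le_mul_of_nonneg_right hS (by linarith)
    _ = (d : ℝ) * (a - b) * a ^ (d - 1) := by ring

lemma sum_le_cover {ι : Type*} [Fintype ι] (f : ι → ℝ) (hf : ∀ i, 0 ≤ f i)
    (A : Finset ℕ) (t : ℕ → Finset ι) (hcov : ∀ i, ∃ k ∈ A, i ∈ t k) :
    ∑ i, f i ≤ ∑ k ∈ A, ∑ i ∈ t k, f i := by
  classical
  calc ∑ i, f i ≤ ∑ i, ∑ k ∈ A, if i ∈ t k then f i else 0 := by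
        apply Finset.sum_le_sum
        intro i _
        obtain ⟨k, hk, hik⟩ := hcov i
        have h0 : ∀ j ∈ A, 0 ≤ (if i ∈ t j then f i else 0) := fun j _ => by
          split <;> simp [hf i]
        have h1 := Finset.single_le_sum (f := fun k => if i ∈ t k then f i else 0) h0 hk
        simpa [hik] using h1
    _ = ∑ k ∈ A, ∑ i, if i ∈ t k then f i else 0 := Finset.sum_comm
    _ = ∑ k ∈ A, ∑ i ∈ t k, f i := by
        apply Finset.sum_congr rfl
        intro k _
        simp [Finset.sum_ite_mem]

/-- quadrature-weight estimate for the localization majorant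
`A_ℓ(θ) = ℓ^d/(1+ℓθ)^{d+1}`: under annulus and ball weight bounds, for every `ℓ ≥ n`,
`sup_x Σ_i w_i ℓ^d/(1+ℓ ρ(x,x_i))^{d+1} ≤ C (ℓ/n)^d`, with `C` depending only on
`d`, `c₁` and the diameter bound `R`. -/
theorem quadrature_localization_estimate
    (d : ℕ) (hd : 1 ≤ d) (c₁ R : ℝ) (hc₁ : 0 ≤ c₁) (hR : 0 ≤ R) :
    ∃ C : ℝ, 0 < C ∧
      ∀ (M : Type) [MetricSpace M],
        (∀ x y : M, dist x y ≤ R) →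
        ∀ (n : ℝ), 1 ≤ n →
        ∀ (N : ℕ) (x : Fin N → M) (w : Fin N → ℝ),
        (∀ i, 0 ≤ w i) →
        -- annulus bound
        (∀ (x₀ : M) (β α : ℝ), 0 ≤ β → 1 / n ≤ α →
            ∑ i ∈ Finset.univ.filter
                (fun i => β < dist x₀ (x i) ∧ dist x₀ (x i) ≤ β + α), w i
              ≤ c₁ * ((β + α) ^ d - β ^ d)) →
        -- ball bound
        (∀ (x₀ : M) (α : ℝ), 1 / n ≤ α →
            ∑ i ∈ Finset.univ.filter (fun i => dist x₀ (x i) ≤ α), w i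
              ≤ c₁ * α ^ d) →
        ∀ (ℓ : ℝ), n ≤ ℓ →
        ∀ x₀ : M,
          ∑ i, w i * ℓ ^ d / (1 + ℓ * dist x₀ (x i)) ^ (d + 1)
            ≤ C * (ℓ / n) ^ d := by
  classical
  refine ⟨2 * c₁ * d + 1, by positivity, ?_⟩
  intro M _ hdiam n hn N x w hw hann hball ℓ hℓ x₀
  obtain ⟨e, rfl⟩ : ∃ e, d = e + 1 := ⟨d - 1, (Nat.succ_pred_eq_of_pos hd).symm⟩
  have hn0 : (0:ℝ) < n := lt_of_lt_of_le one_pos hn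
  have hℓ0 : (0:ℝ) < ℓ := lt_of_lt_of_le hn0 hℓ
  have hln : (1:ℝ) ≤ ℓ / n := (one_le_div hn0).mpr hℓ
  set ρ : Fin N → ℝ := fun i => dist x₀ (x i) with hρ
  have hρ0 : ∀ i, 0 ≤ ρ i := fun i => dist_nonneg
  set f : Fin N → ℝ := fun i => w i * ℓ ^ (e+1) / (1 + ℓ * ρ i) ^ (e + 1 + 1) with hf
  have hfpos : ∀ i, 0 ≤ f i := by
    intro i
    have := hρ0 i
    have := hw i
    positivity
  set K := Nat.floor (n * R) with hK
  set S : ℕ → Finset (Fin N) := fun k =>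
    Finset.univ.filter (fun i => ρ i ≤ ((k:ℝ)+1)/n ∧ (k = 0 ∨ (k:ℝ)/n < ρ i)) with hS
  -- coverage
  have hcov : ∀ i, ∃ k ∈ Finset.range (K+1), i ∈ S k := by
    intro i
    by_cases h : ρ i ≤ 1/n
    · refine ⟨0, by simp, ?_⟩
      simp only [hS, Finset.mem_filter, Finset.mem_univ, true_and]
      constructor
      · simpa using h
      · exact Or.inl (by simp)
    · push_neg at h
      have hnρ : 1 < n * ρ i := by
        have := (div_lt_iff₀ hn0).mp h
        linarith
      have hnρ0 : 0 ≤ n * ρ i := by positivity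
      set k := Nat.ceil (n * ρ i) - 1 with hk
      have hceil1 : 1 < Nat.ceil (n * ρ i) := by
        rw [Nat.lt_ceil]; exact_mod_cast hnρ
      have hk1 : 1 ≤ k := by omega
      have hkc : (k:ℝ) = (Nat.ceil (n * ρ i) : ℝ) - 1 := by
        rw [hk]; push_cast [Nat.cast_sub (by omega : 1 ≤ Nat.ceil (n * ρ i))]; ring
      have hklt : (k:ℝ) < n * ρ i := by
        rw [hkc]
        have := Nat.ceil_lt_add_one hnρ0
        linarith
      have hkK : k ∈ Finset.range (K+1) := by
        rw [Finset.mem_range, Nat.lt_succ_iff, hK]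
        apply Nat.le_floor
        have h1 : n * ρ i ≤ n * R := by
          apply mul_le_mul_of_nonneg_left (hdiam x₀ (x i)) (le_of_lt hn0)
        linarith
      refine ⟨k, hkK, ?_⟩
      simp only [hS, Finset.mem_filter, Finset.mem_univ, true_and]
      constructor
      · rw [le_div_iff₀ hn0, hkc]
        have := Nat.le_ceil (n * ρ i)
        linarith [Nat.le_ceil (n * ρ i)]
      · right
        rw [div_lt_iff₀ hn0]
        linarith
  -- per-shell bound
  have hshell : ∀ k ∈ Finset.range (K+1),
      ∑ i ∈ S k, f i ≤ c₁ * (e+1) * (ℓ/n)^(e+1) * (1 / ((k:ℝ)+1)^2) := by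
    intro k _
    have hk1 : (0:ℝ) < (k:ℝ) + 1 := by positivity
    -- pointwise bound: f i ≤ ℓ^(e+1)/((k+1)^(e+2)) * w i on S k
    have hpt : ∀ i ∈ S k, f i ≤ ℓ^(e+1) / ((k:ℝ)+1)^(e+1+1) * w i := by
      intro i hi
      simp only [hS, Finset.mem_filter, Finset.mem_univ, true_and] at hi
      have hlow : (k:ℝ) + 1 ≤ 1 + ℓ * ρ i := by
        rcases hi.2 with h0 | hgt
        · subst h0
          have := hρ0 i
          simp only [Nat.cast_zero]
          nlinarith
        · have h1 : (k:ℝ) < ρ i * n := (div_lt_iff₀ hn0).mp hgt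
          have h2 : n * ρ i ≤ ℓ * ρ i := mul_le_mul_of_nonneg_right hℓ (hρ0 i)
          nlinarith
      have heq : ℓ^(e+1) / ((k:ℝ)+1)^(e+1+1) * w i = w i * ℓ^(e+1) / ((k:ℝ)+1)^(e+1+1) := by
        ring
      rw [heq]
      show w i * ℓ^(e+1) / (1 + ℓ * ρ i) ^ (e+1+1) ≤ w i * ℓ^(e+1) / (((k:ℝ)+1))^(e+1+1)
      have hnum : 0 ≤ w i * ℓ^(e+1) := mul_nonneg (hw i) (by positivity)
      have hpow : ((k:ℝ)+1)^(e+1+1) ≤ (1 + ℓ * ρ i)^(e+1+1) :=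
        pow_le_pow_left₀ (le_of_lt hk1) hlow _
      have hpow0 : (0:ℝ) < ((k:ℝ)+1)^(e+1+1) := by positivity
      exact div_le_div_of_nonneg_left hnum hpow0 hpow |>.trans_eq rfl
    have h1 : ∑ i ∈ S k, f i ≤ ℓ^(e+1) / ((k:ℝ)+1)^(e+1+1) * ∑ i ∈ S k, w i := by
      rw [Finset.mul_sum]
      exact Finset.sum_le_sum hpt
    -- weight bound on the shell
    have h2 : ∑ i ∈ S k, w i ≤ c₁ * ((((k:ℝ)+1)/n)^(e+1) - ((k:ℝ)/n)^(e+1)) := by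
      rcases Nat.eq_zero_or_pos k with hk0 | hkpos
      · subst hk0
        have hsub : S 0 ⊆ Finset.univ.filter (fun i => dist x₀ (x i) ≤ 1/n) := by
          intro i hi
          simp only [hS, Finset.mem_filter, Finset.mem_univ, true_and] at hi ⊢
          simpa using hi.1
        have := Finset.sum_le_sum_of_subset_of_nonneg hsub (fun i _ _ => hw i)
        have hb := hball x₀ (1/n) le_rfl
        have : ∑ i ∈ S 0, w i ≤ c₁ * (1/n)^(e+1) := le_trans this hb
        simpa using this
      · have hsub : S k ⊆ Finset.univ.filter
            (fun i => (k:ℝ)/n < dist x₀ (x i) ∧ dist x₀ (x i) ≤ (k:ℝ)/n + 1/n) := by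
          intro i hi
          simp only [hS, Finset.mem_filter, Finset.mem_univ, true_and] at hi ⊢
          rcases hi.2 with h0 | hgt
          · omega
          · refine ⟨hgt, ?_⟩
            have heq : (k:ℝ)/n + 1/n = ((k:ℝ)+1)/n := by ring
            rw [heq]
            exact hi.1
        have hmono := Finset.sum_le_sum_of_subset_of_nonneg hsub (fun i _ _ => hw i)
        have hb := hann x₀ ((k:ℝ)/n) (1/n) (by positivity) le_rfl
        have hfin := le_trans hmono hb
        have heq2 : (k:ℝ)/n + 1/n = ((k:ℝ)+1)/n := by ring
        rw [heq2] at hfin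
        exact hfin
    have h3 : (((k:ℝ)+1)/n)^(e+1) - ((k:ℝ)/n)^(e+1)
        ≤ ((e:ℝ)+1) * (1/n) * (((k:ℝ)+1)/n)^e := by
      have haux := pow_sub_pow_le' (e+1) (((k:ℝ)+1)/n) ((k:ℝ)/n)
        (by positivity) ((div_le_div_iff_of_pos_right hn0).mpr (by linarith))
      simp only [Nat.add_sub_cancel] at haux
      have heq3 : (((k:ℝ)+1)/n - (k:ℝ)/n) = 1/n := by ring
      rw [heq3] at haux
      push_cast at haux
      exact haux
    calc ∑ i ∈ S k, f i
        ≤ ℓ^(e+1) / ((k:ℝ)+1)^(e+1+1) * ∑ i ∈ S k, w i := h1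
      _ ≤ ℓ^(e+1) / ((k:ℝ)+1)^(e+1+1)
            * (c₁ * ((((k:ℝ)+1)/n)^(e+1) - ((k:ℝ)/n)^(e+1))) := by
          apply mul_le_mul_of_nonneg_left h2 (by positivity)
      _ ≤ ℓ^(e+1) / ((k:ℝ)+1)^(e+1+1)
            * (c₁ * (((e:ℝ)+1) * (1/n) * (((k:ℝ)+1)/n)^e)) := by
          apply mul_le_mul_of_nonneg_left _ (by positivity)
          exact mul_le_mul_of_nonneg_left h3 hc₁
      _ = c₁ * (e+1) * (ℓ/n)^(e+1) * (1 / ((k:ℝ)+1)^2) := by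
          simp only [div_pow]
          field_simp
          ring
  -- assemble
  calc ∑ i, f i
      ≤ ∑ k ∈ Finset.range (K+1), ∑ i ∈ S k, f i := sum_le_cover f hfpos _ S hcov
    _ ≤ ∑ k ∈ Finset.range (K+1), c₁ * (e+1) * (ℓ/n)^(e+1) * (1 / ((k:ℝ)+1)^2) :=
        Finset.sum_le_sum hshell
    _ = c₁ * (e+1) * (ℓ/n)^(e+1) * ∑ k ∈ Finset.range (K+1), (1:ℝ) / ((k:ℝ)+1)^2 := by
        rw [← Finset.mul_sum]
    _ ≤ c₁ * (e+1) * (ℓ/n)^(e+1) * 2 := by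
        apply mul_le_mul_of_nonneg_left _ (by positivity)
        have := sum_inv_sq_le (K+1)
        have h2 : (0:ℝ) < ((K+1:ℕ):ℝ) + 1 := by positivity
        have : (2:ℝ) / (((K+1:ℕ):ℝ) + 1) ≥ 0 := by positivity
        linarith [sum_inv_sq_le (K+1)]
    _ ≤ (2 * c₁ * ((e:ℝ)+1) + 1) * (ℓ / n) ^ (e+1) := by
        have hp : (0:ℝ) ≤ (ℓ/n)^(e+1) := by positivity
        nlinarith
    _ = (2 * c₁ * ((e+1 : ℕ):ℝ) + 1) * (ℓ / n) ^ (e+1) := by push_cast; ring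
end

section
/- In the abstract filtered-kernel setting, let n ≥ 1, let ℓ ≥ n be a real number, let d ≥ 1, and suppose K : M × M → ℂ is a bounded measurable kernel such that: (i) ∫_M K(x,z) P(z) dμ(z) = P(x) for every P ∈ Π_ℓ and every x ∈ M; (ii) ∫_M |K(x,z)| dμ(z) ≤ c₂ for every x ∈ M; and (iii) the points x₁,…,x_N ∈ M and weights w₁,…,w_N ≥ 0 satisfy Σ_{i=1}^N w_i |K(x_i, z)| ≤ c₃ (ℓ/n)^d for every z ∈ M. Then for every 1 ≤ p₁ < ∞ and every P ∈ Π_ℓ, Σ_{i=1}^N w_i |P(x_i)|^{p₁} ≤ c₂^{p₁−1} c₃ (ℓ/n)^d ∫_M |P(z)|^{p₁} dμ(z). -/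
open MeasureTheory

/-- Bounded measurable real functions on a finite measure space are integrable. -/
lemma integrable_of_bdd {α : Type*} [MeasurableSpace α] {μ : Measure α} [IsFiniteMeasure μ]
    {f : α → ℝ} (hf : Measurable f) (C : ℝ) (h : ∀ z, |f z| ≤ C) : Integrable f μ :=
  memLp_one_iff_integrable.mp <|
    MemLp.of_bound hf.aestronglyMeasurable C
      (Filter.Eventually.of_forall fun z => by simpa [Real.norm_eq_abs] using h z)

/-- The key Hölder step: `(∫ F G)^{p₁} ≤ c₂^{p₁-1} ∫ F G^{p₁}` when `∫ F ≤ c₂`. -/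
lemma holder_key {α : Type*} [MeasurableSpace α] {μ : Measure α} [IsFiniteMeasure μ]
    {F G : α → ℝ} (hFmeas : Measurable F) (hGmeas : Measurable G)
    (hF0 : ∀ z, 0 ≤ F z) (hG0 : ∀ z, 0 ≤ G z)
    {CF CG : ℝ} (hCF : 0 ≤ CF) (hCG : 0 ≤ CG)
    (hFb : ∀ z, F z ≤ CF) (hGb : ∀ z, G z ≤ CG)
    {c₂ : ℝ} (hc₂ : 0 ≤ c₂) (hFint : ∫ z, F z ∂μ ≤ c₂)
    {p₁ : ℝ} (hp₁ : 1 ≤ p₁) :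
    (∫ z, F z * G z ∂μ) ^ p₁ ≤ c₂ ^ (p₁ - 1) * ∫ z, F z * G z ^ p₁ ∂μ := by
  rcases eq_or_lt_of_le hp₁ with h1 | h1
  · simp [← h1, Real.rpow_one]
  -- now 1 < p₁
  have hp₁pos : (0:ℝ) < p₁ := lt_trans one_pos h1
  have hp₁ne : p₁ ≠ 0 := ne_of_gt hp₁pos
  set q := p₁.conjExponent with hqdef
  have hpq : q.HolderConjugate p₁ := (Real.HolderConjugate.conjExponent h1).symm
  have hqpos : (0:ℝ) < q := hpq.pos
  have hqne : q ≠ 0 := hpq.ne_zero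
  have hsum : 1 / q + 1 / p₁ = 1 := by
    simpa [one_div] using hpq.inv_add_inv_eq_one
  set f : α → ℝ := fun z => F z ^ (1 / q) with hfdef
  set g : α → ℝ := fun z => F z ^ (1 / p₁) * G z with hgdef
  have hfmeas : Measurable f :=
    (Real.continuous_rpow_const (by positivity)).measurable.comp hFmeas
  have hgmeas : Measurable g :=
    ((Real.continuous_rpow_const (by positivity)).measurable.comp hFmeas).mul hGmeas
  have hf0 : ∀ z, 0 ≤ f z := fun z => Real.rpow_nonneg (hF0 z) _
  have hg0 : ∀ z, 0 ≤ g z := fun z => mul_nonneg (Real.rpow_nonneg (hF0 z) _) (hG0 z)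
  have hfmem : MemLp f (ENNReal.ofReal q) μ := by
    refine MemLp.of_bound hfmeas.aestronglyMeasurable (CF ^ (1 / q))
      (Filter.Eventually.of_forall fun z => ?_)
    rw [Real.norm_of_nonneg (hf0 z)]
    exact Real.rpow_le_rpow (hF0 z) (hFb z) (by positivity)
  have hgmem : MemLp g (ENNReal.ofReal p₁) μ := by
    refine MemLp.of_bound hgmeas.aestronglyMeasurable (CF ^ (1 / p₁) * CG)
      (Filter.Eventually.of_forall fun z => ?_)
    rw [Real.norm_of_nonneg (hg0 z)]
    exact mul_le_mul (Real.rpow_le_rpow (hF0 z) (hFb z) (by positivity)) (hGb z)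
      (hG0 z) (by positivity)
  have H := integral_mul_le_Lp_mul_Lq_of_nonneg hpq
    (Filter.Eventually.of_forall hf0) (Filter.Eventually.of_forall hg0) hfmem hgmem
  have hfg : (fun z => f z * g z) = fun z => F z * G z := by
    funext z
    show F z ^ (1 / q) * (F z ^ (1 / p₁) * G z) = F z * G z
    rw [← mul_assoc, ← Real.rpow_add' (hF0 z) (by rw [hsum]; norm_num), hsum,
      Real.rpow_one]
  have hfq : (fun z => f z ^ q) = F := by
    funext z
    show (F z ^ (1 / q)) ^ q = F z
    rw [← Real.rpow_mul (hF0 z), one_div_mul_cancel hqne, Real.rpow_one]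
  have hgp : (fun z => g z ^ p₁) = fun z => F z * G z ^ p₁ := by
    funext z
    show (F z ^ (1 / p₁) * G z) ^ p₁ = F z * G z ^ p₁
    rw [Real.mul_rpow (Real.rpow_nonneg (hF0 z) _) (hG0 z), ← Real.rpow_mul (hF0 z),
      one_div_mul_cancel hp₁ne, Real.rpow_one]
  rw [hfg, hfq, hgp] at H
  have hA0 : 0 ≤ ∫ z, F z ∂μ := integral_nonneg hF0
  have hB0 : 0 ≤ ∫ z, F z * G z ^ p₁ ∂μ :=
    integral_nonneg fun z => mul_nonneg (hF0 z) (Real.rpow_nonneg (hG0 z) _)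
  have hI0 : 0 ≤ ∫ z, F z * G z ∂μ :=
    integral_nonneg fun z => mul_nonneg (hF0 z) (hG0 z)
  have hqp : 1 / q * p₁ = p₁ - 1 := by
    rw [one_div, inv_mul_eq_div]
    exact hpq.symm.div_conj_eq_sub_one
  calc (∫ z, F z * G z ∂μ) ^ p₁
      ≤ ((∫ z, F z ∂μ) ^ (1 / q) * (∫ z, F z * G z ^ p₁ ∂μ) ^ (1 / p₁)) ^ p₁ :=
        Real.rpow_le_rpow hI0 H (le_of_lt hp₁pos)
    _ = (∫ z, F z ∂μ) ^ (p₁ - 1) * ∫ z, F z * G z ^ p₁ ∂μ := by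
        rw [Real.mul_rpow (Real.rpow_nonneg hA0 _) (Real.rpow_nonneg hB0 _),
          ← Real.rpow_mul hA0, ← Real.rpow_mul hB0, one_div_mul_cancel hp₁ne,
          Real.rpow_one, hqp]
    _ ≤ c₂ ^ (p₁ - 1) * ∫ z, F z * G z ^ p₁ ∂μ :=
        mul_le_mul_of_nonneg_right (Real.rpow_le_rpow hA0 hFint (by linarith)) hB0

/-- Marcinkiewicz–Zygmund inequality: if the bounded kernel `K`
reproduces `Π_ℓ`, has `L¹` bound `c₂`, and the discretized kernel bound
`Σ_i w_i |K(x_i,z)| ≤ c₃ (ℓ/n)^d` holds, then for `1 ≤ p₁ < ∞` and `P ∈ Π_ℓ`,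
`Σ_i w_i |P(x_i)|^{p₁} ≤ c₂^{p₁−1} c₃ (ℓ/n)^d ∫ |P|^{p₁} dμ`. -/
theorem marcinkiewicz_zygmund_inequality
    {M : Type*} [MeasurableSpace M] (μ : Measure M) [IsFiniteMeasure μ]
    (φ : ℕ → M → ℂ) (lam : ℕ → ℝ)
    (hφmeas : ∀ ℓ, Measurable (φ ℓ))
    (hφbdd : ∀ ℓ, ∃ C : ℝ, ∀ z, ‖φ ℓ z‖ ≤ C)
    (hortho : ∀ ℓ ℓ', ∫ z, φ ℓ z * (starRingEnd ℂ) (φ ℓ' z) ∂μ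
        = if ℓ = ℓ' then 1 else 0)
    (hlam : ∀ ℓ, 0 ≤ lam ℓ)
    (hlamtop : Filter.Tendsto lam Filter.atTop Filter.atTop)
    (n ell : ℝ) (hn : 1 ≤ n) (hell : n ≤ ell) (d : ℕ) (hd : 1 ≤ d)
    (K : M → M → ℂ) (hKmeas : Measurable (Function.uncurry K))
    (hKbdd : ∃ CK : ℝ, ∀ x z, ‖K x z‖ ≤ CK)
    (c₂ c₃ : ℝ)
    -- (i) `K` reproduces every polynomial of degree at most `ell`
    (hrepro : ∀ (T : Finset ℕ) (c : ℕ → ℂ), (∀ ℓ ∈ T, lam ℓ ≤ ell) → ∀ x : M,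
        ∫ z, K x z * (∑ ℓ ∈ T, c ℓ * φ ℓ z) ∂μ = ∑ ℓ ∈ T, c ℓ * φ ℓ x)
    -- (ii) `L¹` bound for the kernel
    (hL1 : ∀ x : M, ∫ z, ‖K x z‖ ∂μ ≤ c₂)
    -- quadrature points and nonnegative weights
    (N : ℕ) (w : Fin N → ℝ) (pts : Fin N → M) (hw : ∀ i, 0 ≤ w i)
    -- (iii) discretized kernel bound
    (hdisc : ∀ z : M, ∑ i, w i * ‖K (pts i) z‖ ≤ c₃ * (ell / n) ^ d)
    (p₁ : ℝ) (hp₁ : 1 ≤ p₁)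
    (T : Finset ℕ) (c : ℕ → ℂ) (hT : ∀ ℓ ∈ T, lam ℓ ≤ ell) :
    ∑ i, w i * ‖∑ ℓ ∈ T, c ℓ * φ ℓ (pts i)‖ ^ p₁
      ≤ c₂ ^ (p₁ - 1) * c₃ * (ell / n) ^ d *
          ∫ z, ‖∑ ℓ ∈ T, c ℓ * φ ℓ z‖ ^ p₁ ∂μ := by
  rcases isEmpty_or_nonempty M with hM | hM
  · rw [Finset.sum_eq_zero fun i _ => (IsEmpty.false (pts i)).elim, integral_of_isEmpty,
      mul_zero]
  obtain ⟨z₀⟩ := hM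
  have hp₁0 : (0:ℝ) ≤ p₁ := le_trans zero_le_one hp₁
  -- rewrite abs as norm in the hypotheses
  have hL1' : ∀ x, ∫ z, ‖K x z‖ ∂μ ≤ c₂ := fun x => by
    simpa only [] using hL1 x
  have hdisc' : ∀ z, ∑ i, w i * ‖K (pts i) z‖ ≤ c₃ * (ell / n) ^ d := fun z => by
    simpa only [] using hdisc z
  obtain ⟨CK, hCK⟩ := hKbdd
  have hCK' : ∀ x z, ‖K x z‖ ≤ CK := fun x z => by
    simpa only [] using hCK x z
  have hCK0 : 0 ≤ CK := le_trans (norm_nonneg _) (hCK' z₀ z₀)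
  set P : M → ℂ := fun z => ∑ ℓ ∈ T, c ℓ * φ ℓ z with hPdef
  have hPmeas : Measurable P :=
    Finset.measurable_sum T fun ℓ _ => measurable_const.mul (hφmeas ℓ)
  have hGmeas : Measurable fun z => ‖P z‖ := hPmeas.norm
  set CG : ℝ := ∑ ℓ ∈ T, ‖c ℓ‖ * (hφbdd ℓ).choose with hCGdef
  have hGb : ∀ z, ‖P z‖ ≤ CG := fun z => by
    refine (norm_sum_le _ _).trans (Finset.sum_le_sum fun ℓ _ => ?_)
    rw [norm_mul]
    refine mul_le_mul_of_nonneg_left ?_ (norm_nonneg _)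
    simpa only [] using (hφbdd ℓ).choose_spec z
  have hCG0 : 0 ≤ CG :=
    Finset.sum_nonneg fun ℓ _ => mul_nonneg (norm_nonneg _)
      (le_trans (norm_nonneg _) ((hφbdd ℓ).choose_spec z₀))
  have hc₂0 : 0 ≤ c₂ := le_trans (integral_nonneg fun z => norm_nonneg _) (hL1' z₀)
  have hc₃d : 0 ≤ c₃ * (ell / n) ^ d :=
    le_trans (Finset.sum_nonneg fun i _ => mul_nonneg (hw i) (norm_nonneg _)) (hdisc' z₀)
  have hKimeas : ∀ x : M, Measurable fun z => ‖K x z‖ := fun x =>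
    (hKmeas.comp measurable_prodMk_left).norm
  -- step 1: pointwise bound from the reproducing property
  have step1 : ∀ i, ‖P (pts i)‖ ≤ ∫ z, ‖K (pts i) z‖ * ‖P z‖ ∂μ := by
    intro i
    calc ‖P (pts i)‖ = ‖∫ z, K (pts i) z * P z ∂μ‖ := by rw [hrepro T c hT (pts i)]
      _ ≤ ∫ z, ‖K (pts i) z * P z‖ ∂μ := norm_integral_le_integral_norm _
      _ = ∫ z, ‖K (pts i) z‖ * ‖P z‖ ∂μ := by simp only [norm_mul]
  -- step 2: Hölder
  have step2 : ∀ i, ‖P (pts i)‖ ^ p₁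
      ≤ c₂ ^ (p₁ - 1) * ∫ z, ‖K (pts i) z‖ * ‖P z‖ ^ p₁ ∂μ := fun i =>
    le_trans (Real.rpow_le_rpow (norm_nonneg _) (step1 i) hp₁0)
      (holder_key (hKimeas (pts i)) hGmeas (fun z => norm_nonneg _) (fun z => norm_nonneg _)
        hCK0 hCG0 (hCK' (pts i)) hGb hc₂0 (hL1' (pts i)) hp₁)
  -- integrability facts
  have hGpmeas : Measurable fun z => ‖P z‖ ^ p₁ :=
    (Real.continuous_rpow_const hp₁0).measurable.comp hGmeas
  have hGpb : ∀ z, ‖P z‖ ^ p₁ ≤ CG ^ p₁ := fun z =>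
    Real.rpow_le_rpow (norm_nonneg _) (hGb z) hp₁0
  have hGp0 : ∀ z, (0:ℝ) ≤ ‖P z‖ ^ p₁ := fun z => Real.rpow_nonneg (norm_nonneg _) _
  have int_i : ∀ i, Integrable (fun z => w i * (‖K (pts i) z‖ * ‖P z‖ ^ p₁)) μ := by
    intro i
    refine integrable_of_bdd (measurable_const.mul ((hKimeas (pts i)).mul hGpmeas))
      (w i * (CK * CG ^ p₁)) fun z => ?_
    rw [abs_of_nonneg (mul_nonneg (hw i) (mul_nonneg (norm_nonneg _) (hGp0 z)))]
    exact mul_le_mul_of_nonneg_left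
      (mul_le_mul (hCK' (pts i) z) (hGpb z) (hGp0 z) hCK0) (hw i)
  have int_sum : Integrable (fun z => (∑ i, w i * ‖K (pts i) z‖) * ‖P z‖ ^ p₁) μ := by
    refine integrable_of_bdd
      ((Finset.measurable_sum Finset.univ fun i _ =>
        measurable_const.mul (hKimeas (pts i))).mul hGpmeas)
      (c₃ * (ell / n) ^ d * CG ^ p₁) fun z => ?_
    have hs0 : (0:ℝ) ≤ ∑ i, w i * ‖K (pts i) z‖ :=
      Finset.sum_nonneg fun i _ => mul_nonneg (hw i) (norm_nonneg _)
    rw [abs_of_nonneg (mul_nonneg hs0 (hGp0 z))]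
    exact mul_le_mul (hdisc' z) (hGpb z) (hGp0 z) hc₃d
  have int_const : Integrable (fun z => c₃ * (ell / n) ^ d * ‖P z‖ ^ p₁) μ := by
    refine integrable_of_bdd (measurable_const.mul hGpmeas)
      (c₃ * (ell / n) ^ d * CG ^ p₁) fun z => ?_
    rw [abs_of_nonneg (mul_nonneg hc₃d (hGp0 z))]
    exact mul_le_mul_of_nonneg_left (hGpb z) hc₃d
  -- main chain
  calc ∑ i, w i * ‖P (pts i)‖ ^ p₁
      ≤ ∑ i, w i * (c₂ ^ (p₁ - 1) * ∫ z, ‖K (pts i) z‖ * ‖P z‖ ^ p₁ ∂μ) :=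
        Finset.sum_le_sum fun i _ => mul_le_mul_of_nonneg_left (step2 i) (hw i)
    _ = c₂ ^ (p₁ - 1) * ∑ i, ∫ z, w i * (‖K (pts i) z‖ * ‖P z‖ ^ p₁) ∂μ := by
        simp_rw [integral_const_mul]
        rw [Finset.mul_sum]
        exact Finset.sum_congr rfl fun i _ => by ring
    _ = c₂ ^ (p₁ - 1) * ∫ z, ∑ i, w i * (‖K (pts i) z‖ * ‖P z‖ ^ p₁) ∂μ := by
        rw [integral_finset_sum _ fun i _ => int_i i]
    _ = c₂ ^ (p₁ - 1) * ∫ z, (∑ i, w i * ‖K (pts i) z‖) * ‖P z‖ ^ p₁ ∂μ := by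
        simp_rw [← mul_assoc, Finset.sum_mul]
    _ ≤ c₂ ^ (p₁ - 1) * ∫ z, c₃ * (ell / n) ^ d * ‖P z‖ ^ p₁ ∂μ := by
        refine mul_le_mul_of_nonneg_left
          (integral_mono int_sum int_const fun z => ?_) (Real.rpow_nonneg hc₂0 _)
        exact mul_le_mul_of_nonneg_right (hdisc' z) (hGp0 z)
    _ = c₂ ^ (p₁ - 1) * c₃ * (ell / n) ^ d * ∫ z, ‖P z‖ ^ p₁ ∂μ := by
        rw [integral_const_mul]
        ring
end

section
/- Let (M, μ) be a measure space, d ≥ 1, r > 0, 0 < a ≤ b, and N ≥ 1. Let n satisfy a N^{1/(2r+d)} ≤ n ≤ b N^{1/(2r+d)}. Let x₁,…,x_N ∈ M, let w₁,…,w_N be weights with 0 < w_i ≤ c₂/N, and let K₁,…,K_N ∈ L²(μ) satisfy ‖K_i‖²_{L²(μ)} ≤ c₁ n^d. Let f : M → ℂ be measurable and square-integrable, let ε₁,…,ε_N be independent real random variables with E[ε_i] = 0 and |ε_i| ≤ M almost surely, and set V := Σ_i w_i (f(x_i) + ε_i) K_i and V* := Σ_i w_i f(x_i) K_i. If the clean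 estimator satisfies ‖V* − f‖_{L²(μ)} ≤ c₅ n^{−r} B for some B ≥ 0, then E[‖V − f‖²_{L²(μ)}] ≤ (c₅² B² a^{−2r} + c₁ c₂² M² b^d) · N^{−2r/(2r+d)}. -/
open MeasureTheory ProbabilityTheory

/-- non-distributed filtered hyperinterpolation for noisy data with
deterministic samples achieves the rate `N^{−2r/(2r+d)}`: with
`a N^{1/(2r+d)} ≤ n ≤ b N^{1/(2r+d)}` and the clean-data error bound
`‖V* − f‖_{L²} ≤ c₅ n^{−r} B`,
`E[‖V − f‖²] ≤ (c₅² B² a^{−2r} + c₁ c₂² Mb² b^d) N^{−2r/(2r+d)}`. -/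
theorem noisy_deterministic_rate
    {M : Type*} [MeasurableSpace M] (μ : Measure M)
    {Ω : Type*} [MeasurableSpace Ω] (P : Measure Ω) [IsProbabilityMeasure P]
    (d : ℕ) (hd : 1 ≤ d) (r : ℝ) (hr : 0 < r)
    (a b : ℝ) (ha : 0 < a) (hab : a ≤ b)
    (N : ℕ) (hN : 1 ≤ N)
    (n : ℝ)
    (hnlow : a * (N : ℝ) ^ ((1 : ℝ) / (2 * r + d)) ≤ n)
    (hnhigh : n ≤ b * (N : ℝ) ^ ((1 : ℝ) / (2 * r + d)))
    (x : Fin N → M) (w : Fin N → ℝ) (c₁ c₂ c₅ Mb B : ℝ) (hB : 0 ≤ B)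
    (hw : ∀ i, 0 < w i) (hwle : ∀ i, w i ≤ c₂ / N)
    (K : Fin N → M → ℂ)
    (hK : ∀ i, MemLp (K i) 2 μ)
    (hKnorm : ∀ i, ∫ z, ‖K i z‖ ^ 2 ∂μ ≤ c₁ * n ^ d)
    (f : M → ℂ) (hf : MemLp f 2 μ)
    (eps : Fin N → Ω → ℝ)
    (hepsmeas : ∀ i, Measurable (eps i))
    (hepsindep : iIndepFun eps P)
    (hepsint : ∀ i, Integrable (eps i) P)
    (hepsmean : ∀ i, ∫ ω, eps i ω ∂P = 0)
    (hepsbdd : ∀ i, ∀ᵐ ω ∂P, |eps i ω| ≤ Mb)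
    -- clean-data error bound (supplied by Theorem 4 with `B = ‖f‖_{W₂^r}`)
    (hclean : Real.sqrt (∫ z, ‖
          ((∑ i, (w i : ℂ) * f (x i) * K i z) - f z)‖ ^ 2 ∂μ) ≤ c₅ * n ^ (-r) * B) :
    ∫ ω, (∫ z, ‖
          ((∑ i, (w i : ℂ) * (f (x i) + (eps i ω : ℂ)) * K i z) - f z)‖ ^ 2 ∂μ) ∂P
      ≤ (c₅ ^ 2 * B ^ 2 * a ^ (-(2 * r)) + c₁ * c₂ ^ 2 * Mb ^ 2 * b ^ d) *
          (N : ℝ) ^ (-(2 * r) / (2 * r + d)) := by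
  classical
  have hNpos : (0:ℝ) < (N:ℝ) := by exact_mod_cast Nat.lt_of_lt_of_le Nat.zero_lt_one hN
  set t : ℝ := (N : ℝ) ^ ((1 : ℝ) / (2 * r + d)) with htdef
  have htpos : 0 < t := Real.rpow_pos_of_pos hNpos _
  have hnpos : 0 < n := lt_of_lt_of_le (mul_pos ha htpos) hnlow
  have hbpos : 0 < b := lt_of_lt_of_le ha hab
  have hE : (0:ℝ) < 2 * r + d := by
    have : (1:ℝ) ≤ (d:ℝ) := by exact_mod_cast hd
    linarith
  have hE0 : (2 * r + (d:ℝ)) ≠ 0 := ne_of_gt hE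
  -- `conj` preserves MemLp
  have hconj : ∀ q : M → ℂ, MemLp q 2 μ → MemLp (fun z => (starRingEnd ℂ) (q z)) 2 μ := by
    intro q hq
    refine hq.of_le (continuous_star.comp_aestronglyMeasurable hq.1) ?_
    filter_upwards with z
    simp
  -- products of two L² functions are integrable
  have hmul : ∀ p q : M → ℂ, MemLp p 2 μ → MemLp q 2 μ →
      Integrable (fun z => p z * (starRingEnd ℂ) (q z)) μ := by
    intro p q hp hq
    have h := MemLp.smul (p := 2) (q := 2) (r := 1) hp (hconj q hq)
    rw [memLp_one_iff_integrable] at h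
    exact h.congr (Filter.Eventually.of_forall fun z => by simp [mul_comm])
  have hre : ∀ p q : M → ℂ, MemLp p 2 μ → MemLp q 2 μ →
      Integrable (fun z => (p z * (starRingEnd ℂ) (q z)).re) μ := by
    intro p q hp hq
    simpa using (hmul p q hp hq).re
  -- the clean estimator error function
  set g : M → ℂ := fun z => (∑ i, (w i : ℂ) * f (x i) * K i z) - f z with hgdef
  have hg : MemLp g 2 μ := by
    have h1 : MemLp (fun z => ∑ i, (w i : ℂ) * f (x i) * K i z) 2 μ := by
      apply memLp_finset_sum
      intro i _
      have := (hK i).const_mul ((w i : ℂ) * f (x i))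
      simpa [mul_assoc] using this
    exact h1.sub hf
  -- key real quantities
  set A : ℝ := ∫ z, ‖g z‖ ^ 2 ∂μ with hAdef
  set C : Fin N → ℝ := fun i => ∫ z, (g z * (starRingEnd ℂ) (K i z)).re ∂μ with hCdef
  set D : Fin N → Fin N → ℝ :=
    fun i j => ∫ z, (K i z * (starRingEnd ℂ) (K j z)).re ∂μ with hDdef
  have hA0 : 0 ≤ A := integral_nonneg fun z => by positivity
  have hRnonneg : 0 ≤ c₅ * n ^ (-r) * B := le_trans (Real.sqrt_nonneg _) hclean
  have hA : A ≤ (c₅ * n ^ (-r) * B) ^ 2 := by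
    have hs := Real.sq_sqrt hA0
    have hclean' : Real.sqrt A ≤ c₅ * n ^ (-r) * B := hclean
    nlinarith [Real.sqrt_nonneg A]
  -- diagonal kernel bounds
  have hDval : ∀ i, D i i = ∫ z, ‖K i z‖ ^ 2 ∂μ := by
    intro i
    simp only [hDdef]
    congr 1
    funext z
    rw [Complex.mul_conj, Complex.ofReal_re, Complex.sq_norm]
  have hD0 : ∀ i, 0 ≤ D i i := by
    intro i
    rw [hDval i]
    exact integral_nonneg fun z => by positivity
  have hDle : ∀ i, D i i ≤ c₁ * n ^ d := fun i => (hDval i) ▸ hKnorm i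
  have hc₁ : 0 ≤ c₁ := by
    have h1 : (0:ℝ) ≤ ∫ z, ‖K ⟨0, hN⟩ z‖ ^ 2 ∂μ :=
      integral_nonneg fun z => by positivity
    nlinarith [hKnorm ⟨0, hN⟩, pow_pos hnpos d]
  -- noise product integrals
  have hprod : ∀ i j : Fin N, Integrable (fun ω => eps i ω * eps j ω) P := by
    intro i j
    refine (integrable_const (Mb * Mb)).mono'
      ((hepsmeas i).mul (hepsmeas j)).aestronglyMeasurable ?_
    filter_upwards [hepsbdd i, hepsbdd j] with ω h1 h2
    rw [Real.norm_eq_abs, abs_mul]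
    exact mul_le_mul h1 h2 (abs_nonneg _) (le_trans (abs_nonneg _) h1)
  have hmean2 : ∀ i j : Fin N, i ≠ j → ∫ ω, eps i ω * eps j ω ∂P = 0 := by
    intro i j hij
    have hind : IndepFun (eps i) (eps j) P := hepsindep.indepFun hij
    have h := hind.integral_fun_mul_eq_mul_integral (hepsint i).1 (hepsint j).1
    have h' : ∫ ω, eps i ω * eps j ω ∂P = (∫ ω, eps i ω ∂P) * ∫ ω, eps j ω ∂P := h
    rw [h', hepsmean i, zero_mul]
  have hsq0 : ∀ i, 0 ≤ ∫ ω, eps i ω * eps i ω ∂P :=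
    fun i => integral_nonneg fun ω => mul_self_nonneg _
  have hsqle : ∀ i, ∫ ω, eps i ω * eps i ω ∂P ≤ Mb ^ 2 := by
    intro i
    have hb : ∀ᵐ ω ∂P, eps i ω * eps i ω ≤ Mb ^ 2 := by
      filter_upwards [hepsbdd i] with ω h
      have h2 : |eps i ω| ^ 2 ≤ Mb ^ 2 := pow_le_pow_left₀ (abs_nonneg _) h 2
      calc eps i ω * eps i ω = |eps i ω| ^ 2 := by rw [sq_abs]; ring
        _ ≤ Mb ^ 2 := h2
    calc ∫ ω, eps i ω * eps i ω ∂P ≤ ∫ _ω, Mb ^ 2 ∂P :=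
          integral_mono_ae (hprod i i) (integrable_const _) hb
      _ = Mb ^ 2 := by simp
  -- the inner (z-)integral, expanded
  have inner_eq : ∀ ω : Ω,
      (∫ z, ‖
          ((∑ i, (w i : ℂ) * (f (x i) + (eps i ω : ℂ)) * K i z) - f z)‖ ^ 2 ∂μ)
      = A + ((∑ i, (2 * w i * C i) * eps i ω)
          + ∑ i, ∑ j, (w i * w j * D i j) * (eps i ω * eps j ω)) := by
    intro ω
    have hpt : ∀ z, ‖
          ((∑ i, (w i : ℂ) * (f (x i) + (eps i ω : ℂ)) * K i z) - f z)‖ ^ 2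
        = ‖g z‖ ^ 2
          + ((∑ i, (2 * w i * eps i ω) * (g z * (starRingEnd ℂ) (K i z)).re)
          + ∑ i, ∑ j, (w i * w j * (eps i ω * eps j ω))
              * (K i z * (starRingEnd ℂ) (K j z)).re) := by
      intro z
      have hsplit : (∑ i, (w i : ℂ) * (f (x i) + (eps i ω : ℂ)) * K i z) - f z
          = g z + ∑ i, ((w i * eps i ω : ℝ) : ℂ) * K i z := by
        have h1 : ∀ i ∈ Finset.univ, (w i : ℂ) * (f (x i) + (eps i ω : ℂ)) * K i z
            = (w i : ℂ) * f (x i) * K i z + ((w i * eps i ω : ℝ) : ℂ) * K i z := by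
          intro i _
          push_cast
          ring
        rw [Finset.sum_congr rfl h1, Finset.sum_add_distrib]
        simp only [hgdef]
        ring
      have hconjs : (starRingEnd ℂ) (∑ i, ((w i * eps i ω : ℝ) : ℂ) * K i z)
          = ∑ i, ((w i * eps i ω : ℝ) : ℂ) * (starRingEnd ℂ) (K i z) := by
        rw [map_sum]
        refine Finset.sum_congr rfl fun i _ => ?_
        rw [map_mul, Complex.conj_ofReal]
      have hcross : (g z * (starRingEnd ℂ) (∑ i, ((w i * eps i ω : ℝ) : ℂ) * K i z)).re
          = ∑ i, (w i * eps i ω) * (g z * (starRingEnd ℂ) (K i z)).re := by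
        rw [hconjs, Finset.mul_sum, Complex.re_sum]
        refine Finset.sum_congr rfl fun i _ => ?_
        rw [mul_left_comm, Complex.re_ofReal_mul]
      have hnsq : Complex.normSq (∑ i, ((w i * eps i ω : ℝ) : ℂ) * K i z)
          = ∑ i, ∑ j, (w i * eps i ω) * (w j * eps j ω)
              * (K i z * (starRingEnd ℂ) (K j z)).re := by
        have h0 : Complex.normSq (∑ i, ((w i * eps i ω : ℝ) : ℂ) * K i z)
            = ((∑ i, ((w i * eps i ω : ℝ) : ℂ) * K i z)
                * (starRingEnd ℂ) (∑ i, ((w i * eps i ω : ℝ) : ℂ) * K i z)).re := by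
          rw [Complex.mul_conj, Complex.ofReal_re]
        rw [h0, hconjs, Finset.sum_mul_sum, Complex.re_sum]
        refine Finset.sum_congr rfl fun i _ => ?_
        rw [Complex.re_sum]
        refine Finset.sum_congr rfl fun j _ => ?_
        have h1 : ((w i * eps i ω : ℝ) : ℂ) * K i z
              * (((w j * eps j ω : ℝ) : ℂ) * (starRingEnd ℂ) (K j z))
            = (((w i * eps i ω) * (w j * eps j ω) : ℝ) : ℂ)
              * (K i z * (starRingEnd ℂ) (K j z)) := by
          push_cast
          ring
        rw [h1, Complex.re_ofReal_mul]
      rw [hsplit, Complex.sq_norm, Complex.normSq_add, ← Complex.sq_norm (g z),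
        hcross, hnsq, Finset.mul_sum]
      have hs1 : ∑ i, 2 * ((w i * eps i ω) * (g z * (starRingEnd ℂ) (K i z)).re)
          = ∑ i, (2 * w i * eps i ω) * (g z * (starRingEnd ℂ) (K i z)).re :=
        Finset.sum_congr rfl fun i _ => by ring
      have hs2 : ∑ i, ∑ j, (w i * eps i ω) * (w j * eps j ω)
            * (K i z * (starRingEnd ℂ) (K j z)).re
          = ∑ i, ∑ j, (w i * w j * (eps i ω * eps j ω))
            * (K i z * (starRingEnd ℂ) (K j z)).re :=
        Finset.sum_congr rfl fun i _ => Finset.sum_congr rfl fun j _ => by ring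
      rw [hs1, hs2]
      ring
    have hint1 : Integrable (fun z => ‖g z‖ ^ 2) μ := by
      refine (hre g g hg hg).congr ?_
      filter_upwards with z
      rw [Complex.mul_conj, Complex.ofReal_re, Complex.sq_norm]
    have hint2 : ∀ i : Fin N, Integrable
        (fun z => (2 * w i * eps i ω) * (g z * (starRingEnd ℂ) (K i z)).re) μ :=
      fun i => (hre g (K i) hg (hK i)).const_mul _
    have hint3 : ∀ i j : Fin N, Integrable
        (fun z => (w i * w j * (eps i ω * eps j ω))
          * (K i z * (starRingEnd ℂ) (K j z)).re) μ :=
      fun i j => (hre (K i) (K j) (hK i) (hK j)).const_mul _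
    calc (∫ z, ‖
          ((∑ i, (w i : ℂ) * (f (x i) + (eps i ω : ℂ)) * K i z) - f z)‖ ^ 2 ∂μ)
        = ∫ z, (‖g z‖ ^ 2
          + ((∑ i, (2 * w i * eps i ω) * (g z * (starRingEnd ℂ) (K i z)).re)
          + ∑ i, ∑ j, (w i * w j * (eps i ω * eps j ω))
              * (K i z * (starRingEnd ℂ) (K j z)).re)) ∂μ := by
          exact integral_congr_ae (Filter.Eventually.of_forall hpt)
      _ = A + ((∑ i, (2 * w i * C i) * eps i ω)
          + ∑ i, ∑ j, (w i * w j * D i j) * (eps i ω * eps j ω)) := by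
          have hintS1 : Integrable (fun z =>
              ∑ i, (2 * w i * eps i ω) * (g z * (starRingEnd ℂ) (K i z)).re) μ :=
            integrable_finset_sum _ fun i _ => hint2 i
          have hintS2 : Integrable (fun z => ∑ i, ∑ j,
              (w i * w j * (eps i ω * eps j ω))
                * (K i z * (starRingEnd ℂ) (K j z)).re) μ :=
            integrable_finset_sum _ fun i _ =>
              integrable_finset_sum _ fun j _ => hint3 i j
          have hintS12 : Integrable (fun z =>
              (∑ i, (2 * w i * eps i ω) * (g z * (starRingEnd ℂ) (K i z)).re)
              + ∑ i, ∑ j, (w i * w j * (eps i ω * eps j ω))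
                * (K i z * (starRingEnd ℂ) (K j z)).re) μ := hintS1.add hintS2
          rw [integral_add hint1 hintS12,
            integral_add hintS1 hintS2,
            integral_finset_sum _ fun i _ => hint2 i,
            integral_finset_sum _ fun i _ =>
              integrable_finset_sum _ fun j _ => hint3 i j]
          congr 1
          congr 1
          · refine Finset.sum_congr rfl fun i _ => ?_
            rw [integral_const_mul]
            simp only [hCdef]
            ring
          · refine Finset.sum_congr rfl fun i _ => ?_
            rw [integral_finset_sum _ fun j _ => hint3 i j]
            refine Finset.sum_congr rfl fun j _ => ?_
            rw [integral_const_mul]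
            simp only [hDdef]
            ring
  -- integrate over ω
  have houter : ∫ ω, (∫ z, ‖
        ((∑ i, (w i : ℂ) * (f (x i) + (eps i ω : ℂ)) * K i z) - f z)‖ ^ 2 ∂μ) ∂P
      = A + ∑ i, (w i * w i * D i i) * ∫ ω, eps i ω * eps i ω ∂P := by
    have hS1int : Integrable (fun ω => ∑ i, (2 * w i * C i) * eps i ω) P :=
      integrable_finset_sum _ fun i _ => (hepsint i).const_mul _
    have hS2int : Integrable (fun ω => ∑ i, ∑ j,
        (w i * w j * D i j) * (eps i ω * eps j ω)) P :=
      integrable_finset_sum _ fun i _ =>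
        integrable_finset_sum _ fun j _ => (hprod i j).const_mul _
    calc ∫ ω, (∫ z, ‖
          ((∑ i, (w i : ℂ) * (f (x i) + (eps i ω : ℂ)) * K i z) - f z)‖ ^ 2 ∂μ) ∂P
        = ∫ ω, (A + ((∑ i, (2 * w i * C i) * eps i ω)
          + ∑ i, ∑ j, (w i * w j * D i j) * (eps i ω * eps j ω))) ∂P :=
          integral_congr_ae (Filter.Eventually.of_forall inner_eq)
      _ = A + ∑ i, (w i * w i * D i i) * ∫ ω, eps i ω * eps i ω ∂P := by
          have hS12 : Integrable (fun ω => (∑ i, (2 * w i * C i) * eps i ω)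
              + ∑ i, ∑ j, (w i * w j * D i j) * (eps i ω * eps j ω)) P :=
            hS1int.add hS2int
          rw [integral_add (integrable_const A) hS12,
            integral_add hS1int hS2int, integral_const]
          simp only [probReal_univ, one_smul]
          congr 1
          have h1 : ∫ ω, (∑ i, (2 * w i * C i) * eps i ω) ∂P = 0 := by
            rw [integral_finset_sum _ fun i _ => (hepsint i).const_mul _]
            refine Finset.sum_eq_zero fun i _ => ?_
            rw [integral_const_mul, hepsmean i, mul_zero]
          have h2 : ∫ ω, (∑ i, ∑ j, (w i * w j * D i j) * (eps i ω * eps j ω)) ∂P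
              = ∑ i, (w i * w i * D i i) * ∫ ω, eps i ω * eps i ω ∂P := by
            rw [integral_finset_sum _ fun i _ =>
              integrable_finset_sum _ fun j _ => (hprod i j).const_mul _]
            refine Finset.sum_congr rfl fun i _ => ?_
            rw [integral_finset_sum _ fun j _ => (hprod i j).const_mul _]
            rw [Finset.sum_eq_single i]
            · rw [integral_const_mul]
            · intro j _ hji
              rw [integral_const_mul, hmean2 i j (Ne.symm hji), mul_zero]
            · intro h
              exact absurd (Finset.mem_univ i) h
          rw [h1, h2, zero_add]
  rw [houter]
  -- now the numeric bound
  have hterm : ∀ i : Fin N, (w i * w i * D i i) * ∫ ω, eps i ω * eps i ω ∂P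
      ≤ (c₂ / N) ^ 2 * (c₁ * n ^ d) * Mb ^ 2 := by
    intro i
    have hw2 : w i * w i ≤ (c₂ / N) ^ 2 := by nlinarith [hw i, hwle i]
    have h1 : w i * w i * D i i ≤ (c₂ / N) ^ 2 * (c₁ * n ^ d) :=
      mul_le_mul hw2 (hDle i) (hD0 i) (sq_nonneg _)
    exact mul_le_mul h1 (hsqle i) (hsq0 i)
      (mul_nonneg (sq_nonneg _) (mul_nonneg hc₁ (pow_nonneg hnpos.le d)))
  have hsum : ∑ i, (w i * w i * D i i) * ∫ ω, eps i ω * eps i ω ∂P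
      ≤ (N:ℝ) * ((c₂ / N) ^ 2 * (c₁ * n ^ d) * Mb ^ 2) := by
    calc ∑ i : Fin N, (w i * w i * D i i) * ∫ ω, eps i ω * eps i ω ∂P
        ≤ ∑ _i : Fin N, (c₂ / N) ^ 2 * (c₁ * n ^ d) * Mb ^ 2 :=
          Finset.sum_le_sum fun i _ => hterm i
      _ = (N:ℝ) * ((c₂ / N) ^ 2 * (c₁ * n ^ d) * Mb ^ 2) := by
          rw [Finset.sum_const, Finset.card_univ, Fintype.card_fin, nsmul_eq_mul]
  -- rate arithmetic
  have hT1 : (c₅ * n ^ (-r) * B) ^ 2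
      ≤ c₅ ^ 2 * B ^ 2 * a ^ (-(2 * r)) * (N:ℝ) ^ (-(2 * r) / (2 * r + d)) := by
    have e2 : (n ^ (-r)) ^ 2 = n ^ (-(2 * r)) := by
      rw [← Real.rpow_natCast (n ^ (-r)) 2, ← Real.rpow_mul hnpos.le]
      congr 1
      push_cast
      ring
    have e3 : n ^ (-(2 * r)) ≤ (a * t) ^ (-(2 * r)) :=
      Real.rpow_le_rpow_of_nonpos (mul_pos ha htpos) hnlow (by linarith)
    have e4 : (a * t) ^ (-(2 * r)) = a ^ (-(2 * r)) * t ^ (-(2 * r)) :=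
      Real.mul_rpow ha.le htpos.le
    have e5 : t ^ (-(2 * r)) = (N:ℝ) ^ (-(2 * r) / (2 * r + d)) := by
      rw [htdef, ← Real.rpow_mul hNpos.le]
      congr 1
      field_simp
    calc (c₅ * n ^ (-r) * B) ^ 2 = c₅ ^ 2 * B ^ 2 * (n ^ (-r)) ^ 2 := by ring
      _ = c₅ ^ 2 * B ^ 2 * n ^ (-(2 * r)) := by rw [e2]
      _ ≤ c₅ ^ 2 * B ^ 2 * (a ^ (-(2 * r)) * (N:ℝ) ^ (-(2 * r) / (2 * r + d))) := by
          have := e3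
          rw [e4, e5] at this
          exact mul_le_mul_of_nonneg_left this (by positivity)
      _ = c₅ ^ 2 * B ^ 2 * a ^ (-(2 * r)) * (N:ℝ) ^ (-(2 * r) / (2 * r + d)) := by
          ring
  have hT2 : (N:ℝ) * ((c₂ / N) ^ 2 * (c₁ * n ^ d) * Mb ^ 2)
      ≤ c₁ * c₂ ^ 2 * Mb ^ 2 * b ^ d * (N:ℝ) ^ (-(2 * r) / (2 * r + d)) := by
    have h2 : t ^ d / (N:ℝ) = (N:ℝ) ^ (-(2 * r) / (2 * r + d)) := by
      rw [← Real.rpow_natCast t d, htdef, ← Real.rpow_mul hNpos.le,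
        div_eq_mul_inv, ← Real.rpow_neg_one (N:ℝ), ← Real.rpow_add hNpos]
      congr 1
      field_simp
      ring
    have hfrac : n ^ d / (N:ℝ) ≤ b ^ d * (N:ℝ) ^ (-(2 * r) / (2 * r + d)) := by
      have h1 : n ^ d ≤ b ^ d * t ^ d := by
        rw [← mul_pow]
        exact pow_le_pow_left₀ hnpos.le hnhigh d
      calc n ^ d / (N:ℝ) ≤ (b ^ d * t ^ d) / (N:ℝ) := by gcongr
        _ = b ^ d * (t ^ d / (N:ℝ)) := by ring
        _ = b ^ d * (N:ℝ) ^ (-(2 * r) / (2 * r + d)) := by rw [h2]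
    have heq : (N:ℝ) * ((c₂ / N) ^ 2 * (c₁ * n ^ d) * Mb ^ 2)
        = c₁ * c₂ ^ 2 * Mb ^ 2 * (n ^ d / (N:ℝ)) := by
      field_simp
    rw [heq]
    calc c₁ * c₂ ^ 2 * Mb ^ 2 * (n ^ d / (N:ℝ))
        ≤ c₁ * c₂ ^ 2 * Mb ^ 2 * (b ^ d * (N:ℝ) ^ (-(2 * r) / (2 * r + d))) := by
          exact mul_le_mul_of_nonneg_left hfrac (by positivity)
      _ = c₁ * c₂ ^ 2 * Mb ^ 2 * b ^ d * (N:ℝ) ^ (-(2 * r) / (2 * r + d)) := by ring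
  calc A + ∑ i, (w i * w i * D i i) * ∫ ω, eps i ω * eps i ω ∂P
      ≤ (c₅ * n ^ (-r) * B) ^ 2 + (N:ℝ) * ((c₂ / N) ^ 2 * (c₁ * n ^ d) * Mb ^ 2) :=
        add_le_add hA hsum
    _ ≤ c₅ ^ 2 * B ^ 2 * a ^ (-(2 * r)) * (N:ℝ) ^ (-(2 * r) / (2 * r + d))
        + c₁ * c₂ ^ 2 * Mb ^ 2 * b ^ d * (N:ℝ) ^ (-(2 * r) / (2 * r + d)) :=
        add_le_add hT1 hT2
    _ = (c₅ ^ 2 * B ^ 2 * a ^ (-(2 * r)) + c₁ * c₂ ^ 2 * Mb ^ 2 * b ^ d) *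
          (N:ℝ) ^ (-(2 * r) / (2 * r + d)) := by ring
end

section
/- Let H be a real Hilbert space, f ∈ H, d ≥ 1, r > 0, 0 < a ≤ b, A ≥ 0, B ≥ 0, and m ≥ 1. Let N₁,…,N_m ≥ 1 with N := Σ_j N_j, and let n satisfy a N^{1/(2r+d)} ≤ n ≤ b N^{1/(2r+d)}. Let g₁,…,g_m be independent Bochner-measurable H-valued random elements with E[‖g_j‖²] < ∞ such that for every j: E[‖g_j − f‖²] ≤ A n^{−2r} + B n^d / N_j and ‖E[g_j] − f‖² ≤ A n^{−2r}. Then E[‖Σ_{j=1}^m (N_j/N) g_j − f‖²] ≤ (2 A a^{−2r} + B b^d) · N^{−2r/(2r+d)}. -/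
open MeasureTheory ProbabilityTheory
open scoped RealInnerProductSpace

lemma indep_integral_inner_sc
    {E : Type*} [NormedAddCommGroup E] [InnerProductSpace ℝ E] [CompleteSpace E]
    [MeasurableSpace E] [BorelSpace E] [SecondCountableTopology E]
    {Ω : Type*} [MeasurableSpace Ω] {P : Measure Ω} [IsProbabilityMeasure P]
    {X Y : Ω → E} (hX : Measurable X) (hY : Measurable Y)
    (hXY : IndepFun X Y P) (hX1 : Integrable X P) (hY1 : Integrable Y P) :
    ∫ ω, ⟪X ω, Y ω⟫ ∂P = ⟪∫ ω, X ω ∂P, ∫ ω, Y ω ∂P⟫ := by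
  have hmap : P.map (fun ω => (X ω, Y ω)) = (P.map X).prod (P.map Y) :=
    (indepFun_iff_map_prod_eq_prod_map_map hX.aemeasurable hY.aemeasurable).mp hXY
  have hpair : Measurable fun ω => (X ω, Y ω) := hX.prodMk hY
  have hinner : Measurable fun p : E × E => ⟪p.1, p.2⟫ :=
    measurable_fst.inner measurable_snd
  haveI h1 : IsProbabilityMeasure (P.map X) := Measure.isProbabilityMeasure_map hX.aemeasurable
  haveI h2 : IsProbabilityMeasure (P.map Y) := Measure.isProbabilityMeasure_map hY.aemeasurable
  have hXid : Integrable (fun x : E => x) (P.map X) := by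
    rw [show (fun x : E => x) = id from rfl,
      integrable_map_measure aestronglyMeasurable_id hX.aemeasurable]; exact hX1
  have hYid : Integrable (fun y : E => y) (P.map Y) := by
    rw [show (fun y : E => y) = id from rfl,
      integrable_map_measure aestronglyMeasurable_id hY.aemeasurable]; exact hY1
  have hint : Integrable (fun p : E × E => ⟪p.1, p.2⟫) ((P.map X).prod (P.map Y)) := by
    refine Integrable.mono' (hXid.norm.mul_prod hYid.norm) hinner.aestronglyMeasurable ?_
    exact Filter.Eventually.of_forall fun p => by
      simpa using abs_real_inner_le_norm p.1 p.2
  have hXv : ∫ x, x ∂(P.map X) = ∫ ω, X ω ∂P := integral_map hX.aemeasurable aestronglyMeasurable_id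
  have hYv : ∫ y, y ∂(P.map Y) = ∫ ω, Y ω ∂P := integral_map hY.aemeasurable aestronglyMeasurable_id
  calc ∫ ω, ⟪X ω, Y ω⟫ ∂P
      = ∫ p : E × E, ⟪p.1, p.2⟫ ∂((P.map X).prod (P.map Y)) := by
        rw [← hmap, integral_map hpair.aemeasurable]
        exact hinner.aestronglyMeasurable
    _ = ∫ x, ∫ y, ⟪x, y⟫ ∂(P.map Y) ∂(P.map X) := integral_prod _ hint
    _ = ∫ x, ⟪x, ∫ y, y ∂(P.map Y)⟫ ∂(P.map X) := by
        refine integral_congr_ae (Filter.Eventually.of_forall fun x => ?_)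
        exact integral_inner hYid x
    _ = ∫ x, ⟪∫ y, y ∂(P.map Y), x⟫ ∂(P.map X) :=
        integral_congr_ae (Filter.Eventually.of_forall fun x => real_inner_comm _ _)
    _ = ⟪∫ y, y ∂(P.map Y), ∫ x, x ∂(P.map X)⟫ := integral_inner hXid _
    _ = ⟪∫ ω, X ω ∂P, ∫ ω, Y ω ∂P⟫ := by rw [hXv, hYv, real_inner_comm]
lemma indep_integral_inner
    {H : Type*} [NormedAddCommGroup H] [InnerProductSpace ℝ H] [CompleteSpace H]
    [MeasurableSpace H] [BorelSpace H]
    {Ω : Type*} [MeasurableSpace Ω] {P : Measure Ω} [IsProbabilityMeasure P]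
    {X Y : Ω → H} (hXY : IndepFun X Y P) (hX1 : Integrable X P) (hY1 : Integrable Y P) :
    ∫ ω, ⟪X ω, Y ω⟫ ∂P = ⟪∫ ω, X ω ∂P, ∫ ω, Y ω ∂P⟫ := by
  obtain ⟨X', hX'sm, hXX'⟩ := hX1.aestronglyMeasurable
  obtain ⟨Y', hY'sm, hYY'⟩ := hY1.aestronglyMeasurable
  set s : Submodule ℝ H := (Submodule.span ℝ (Set.range X' ∪ Set.range Y')).topologicalClosure
    with hs_def
  have hs_sep : TopologicalSpace.IsSeparable (s : Set H) := by
    have h1 := ((hX'sm.isSeparable_range.union hY'sm.isSeparable_range).span (R := ℝ)).closure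
    rw [hs_def, Submodule.topologicalClosure_coe]
    exact h1
  have hs_closed : IsClosed (s : Set H) := Submodule.isClosed_topologicalClosure _
  haveI : CompleteSpace s := hs_closed.completeSpace_coe
  haveI : TopologicalSpace.SeparableSpace s := hs_sep.separableSpace
  haveI : SecondCountableTopology s := UniformSpace.secondCountable_of_separable s
  haveI : BorelSpace s := Subtype.borelSpace (s : Set H)
  have hmemX : ∀ ω, X' ω ∈ s :=
    fun ω => Submodule.le_topologicalClosure _ (Submodule.subset_span (Or.inl ⟨ω, rfl⟩))
  have hmemY : ∀ ω, Y' ω ∈ s :=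
    fun ω => Submodule.le_topologicalClosure _ (Submodule.subset_span (Or.inr ⟨ω, rfl⟩))
  set X'' : Ω → s := fun ω => ⟨X' ω, hmemX ω⟩ with hX''def
  set Y'' : Ω → s := fun ω => ⟨Y' ω, hmemY ω⟩ with hY''def
  have hX''m : Measurable X'' := (hX'sm.measurable).subtype_mk
  have hY''m : Measurable Y'' := (hY'sm.measurable).subtype_mk
  have hX1' : Integrable X' P := hX1.congr hXX'
  have hY1' : Integrable Y' P := hY1.congr hYY'
  have hX''1 : Integrable X'' P := by
    refine Integrable.mono' hX1'.norm (hX''m.stronglyMeasurable.aestronglyMeasurable) ?_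
    exact Filter.Eventually.of_forall fun ω => le_of_eq rfl
  have hY''1 : Integrable Y'' P := by
    refine Integrable.mono' hY1'.norm (hY''m.stronglyMeasurable.aestronglyMeasurable) ?_
    exact Filter.Eventually.of_forall fun ω => le_of_eq rfl
  have hXY' : IndepFun X' Y' P := hXY.congr hXX' hYY'
  have hXY'' : IndepFun X'' Y'' P := by
    rw [indepFun_iff_measure_inter_preimage_eq_mul] at hXY' ⊢
    intro S T hS hT
    obtain ⟨S', hS', rfl⟩ := MeasurableSpace.measurableSet_comap.mp hS
    obtain ⟨T', hT', rfl⟩ := MeasurableSpace.measurableSet_comap.mp hT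
    exact hXY' S' T' hS' hT'
  have key := indep_integral_inner_sc hX''m hY''m hXY'' hX''1 hY''1
  have hiX : ∫ ω, X' ω ∂P = (↑(∫ ω, X'' ω ∂P) : H) := by
    have h := ContinuousLinearMap.integral_comp_comm (Submodule.subtypeL s) hX''1
    simpa using h
  have hiY : ∫ ω, Y' ω ∂P = (↑(∫ ω, Y'' ω ∂P) : H) := by
    have h := ContinuousLinearMap.integral_comp_comm (Submodule.subtypeL s) hY''1
    simpa using h
  calc ∫ ω, ⟪X ω, Y ω⟫ ∂P = ∫ ω, ⟪X' ω, Y' ω⟫ ∂P := by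
        refine integral_congr_ae ?_
        filter_upwards [hXX', hYY'] with ω h1 h2
        rw [h1, h2]
    _ = ∫ ω, ⟪X'' ω, Y'' ω⟫ ∂P := by
        refine integral_congr_ae (Filter.Eventually.of_forall fun ω => ?_)
        exact (Submodule.coe_inner s (X'' ω) (Y'' ω)).symm
    _ = ⟪∫ ω, X'' ω ∂P, ∫ ω, Y'' ω ∂P⟫ := key
    _ = ⟪∫ ω, X' ω ∂P, ∫ ω, Y' ω ∂P⟫ := by
        rw [hiX, hiY]; exact Submodule.coe_inner _ _ _
    _ = ⟪∫ ω, X ω ∂P, ∫ ω, Y ω ∂P⟫ := by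
        rw [integral_congr_ae hXX', integral_congr_ae hYY']

set_option maxHeartbeats 1000000 in
/-- distributed filtered hyperinterpolation for noisy data with
deterministic samples achieves the rate `N^{−2r/(2r+d)}`: for independent servers
`g_j` with per-server bounds `E[‖g_j − f‖²] ≤ A n^{−2r} + B n^d/N_j` and
`‖E[g_j] − f‖² ≤ A n^{−2r}`, and `a N^{1/(2r+d)} ≤ n ≤ b N^{1/(2r+d)}`,
`E[‖Σ_j (N_j/N) g_j − f‖²] ≤ (2A a^{−2r} + B b^d) N^{−2r/(2r+d)}`. -/
theorem distributed_noisy_deterministic_rate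
    {H : Type*} [NormedAddCommGroup H] [InnerProductSpace ℝ H] [CompleteSpace H]
    [MeasurableSpace H] [BorelSpace H]
    {Ω : Type*} [MeasurableSpace Ω] (P : Measure Ω) [IsProbabilityMeasure P]
    (f : H) (d : ℕ) (hd : 1 ≤ d) (r : ℝ) (hr : 0 < r)
    (a b A B : ℝ) (ha : 0 < a) (hab : a ≤ b) (hA : 0 ≤ A) (hB : 0 ≤ B)
    (m : ℕ) (hm : 1 ≤ m)
    (Nj : Fin m → ℕ) (hNj : ∀ j, 1 ≤ Nj j)
    (n : ℝ)
    (hnlow : a * ((∑ j, Nj j : ℕ) : ℝ) ^ ((1 : ℝ) / (2 * r + d)) ≤ n)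
    (hnhigh : n ≤ b * ((∑ j, Nj j : ℕ) : ℝ) ^ ((1 : ℝ) / (2 * r + d)))
    (g : Fin m → Ω → H)
    (hgmeas : ∀ j, Measurable (g j))
    (hgindep : iIndepFun g P)
    (hgL2 : ∀ j, MemLp (g j) 2 P)
    (hvar : ∀ j, ∫ ω, ‖g j ω - f‖ ^ 2 ∂P ≤ A * n ^ (-(2 * r)) + B * n ^ d / (Nj j))
    (hbias : ∀ j, ‖(∫ ω, g j ω ∂P) - f‖ ^ 2 ≤ A * n ^ (-(2 * r))) :
    ∫ ω, ‖(∑ j, ((Nj j : ℝ) / ((∑ j', Nj j' : ℕ) : ℝ)) • g j ω) - f‖ ^ 2 ∂P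
      ≤ (2 * A * a ^ (-(2 * r)) + B * b ^ d) *
          ((∑ j, Nj j : ℕ) : ℝ) ^ (-(2 * r) / (2 * r + d)) := by
  classical
  set N : ℕ := ∑ j', Nj j' with hN_def
  have hN1 : 1 ≤ N := le_trans (hNj ⟨0, hm⟩) (Finset.single_le_sum
    (fun j _ => Nat.zero_le (Nj j)) (Finset.mem_univ (⟨0, hm⟩ : Fin m)))
  have hNpos : (0 : ℝ) < N := by exact_mod_cast hN1
  have hNne : (N : ℝ) ≠ 0 := hNpos.ne'
  set w : Fin m → ℝ := fun j => (Nj j : ℝ) / N with hw_def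
  have hw_nonneg : ∀ j, 0 ≤ w j := fun j => div_nonneg (Nat.cast_nonneg _) hNpos.le
  have hw_sum : ∑ j, w j = 1 := by
    rw [hw_def, ← Finset.sum_div]
    rw [show ∑ j, (Nj j : ℝ) = (N : ℝ) by rw [hN_def]; push_cast; ring]
    exact div_self hNne
  -- positivity of n
  have hs0 : (0 : ℝ) < 2 * r + d := by positivity
  have hupos : (0 : ℝ) < (N : ℝ) ^ ((1 : ℝ) / (2 * r + d)) := Real.rpow_pos_of_pos hNpos _
  have hn_pos : 0 < n := lt_of_lt_of_le (by positivity) hnlow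
  set c : ℝ := A * n ^ (-(2 * r)) with hc_def
  have hc_nonneg : 0 ≤ c := mul_nonneg hA (Real.rpow_nonneg hn_pos.le _)
  -- centered variables
  set X : Fin m → Ω → H := fun j ω => g j ω - f with hX_def
  have hXL2 : ∀ j, MemLp (X j) 2 P := fun j => (hgL2 j).sub (memLp_const f)
  have hX1 : ∀ j, Integrable (X j) P := fun j => (hXL2 j).integrable one_le_two
  have hg1 : ∀ j, Integrable (g j) P := fun j => (hgL2 j).integrable one_le_two
  have hmean : ∀ j, ∫ ω, X j ω ∂P = (∫ ω, g j ω ∂P) - f := by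
    intro j
    rw [hX_def]
    rw [integral_sub (hg1 j) (integrable_const f), integral_const]
    simp
  -- integrability of inner products
  have hinner_int : ∀ i j, Integrable (fun ω => ⟪X i ω, X j ω⟫) P := by
    intro i j
    have hi := ((hXL2 i).norm).integrable_sq
    have hj := ((hXL2 j).norm).integrable_sq
    refine ((hi.add hj).div_const 2).mono' ?_ ?_
    · exact continuous_inner.comp_aestronglyMeasurable
        (((hX1 i).aestronglyMeasurable).prodMk ((hX1 j).aestronglyMeasurable))
    · filter_upwards with ω
      have h1 := abs_real_inner_le_norm (X i ω) (X j ω)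
      simp only [Pi.add_apply]
      rw [Real.norm_eq_abs]
      nlinarith [sq_nonneg (‖X i ω‖ - ‖X j ω‖), abs_nonneg ⟪X i ω, X j ω⟫]
  set I : Fin m → Fin m → ℝ := fun i j => ∫ ω, ⟪X i ω, X j ω⟫ ∂P with hI_def
  -- pointwise algebraic identity
  have hpt : ∀ ω, (∑ j, w j • g j ω) - f = ∑ j, w j • X j ω := by
    intro ω
    rw [hX_def]
    simp only [smul_sub]
    rw [Finset.sum_sub_distrib, ← Finset.sum_smul, hw_sum, one_smul]
  have hnorm : ∀ v : Fin m → H,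
      ‖∑ j, w j • v j‖ ^ 2 = ∑ i, ∑ j, (w i * w j) * ⟪v i, v j⟫ := by
    intro v
    rw [← real_inner_self_eq_norm_sq, sum_inner]
    refine Finset.sum_congr rfl fun i _ => ?_
    rw [real_inner_smul_left, inner_sum, Finset.mul_sum]
    refine Finset.sum_congr rfl fun j _ => ?_
    rw [real_inner_smul_right]; ring
  -- expand the objective
  have hexp : ∫ ω, ‖(∑ j, w j • g j ω) - f‖ ^ 2 ∂P = ∑ i, ∑ j, (w i * w j) * I i j := by
    calc ∫ ω, ‖(∑ j, w j • g j ω) - f‖ ^ 2 ∂P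
        = ∫ ω, ∑ i, ∑ j, (w i * w j) * ⟪X i ω, X j ω⟫ ∂P := by
          refine integral_congr_ae (Filter.Eventually.of_forall fun ω => ?_)
          show ‖(∑ j, w j • g j ω) - f‖ ^ 2 = ∑ i, ∑ j, (w i * w j) * ⟪X i ω, X j ω⟫
          rw [hpt ω, hnorm]
      _ = ∑ i, ∑ j, (w i * w j) * I i j := by
          rw [integral_finset_sum _ (fun i _ =>
            integrable_finset_sum _ (fun j _ => (hinner_int i j).const_mul _))]
          refine Finset.sum_congr rfl fun i _ => ?_
          rw [integral_finset_sum _ (fun j _ => (hinner_int i j).const_mul _)]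
          exact Finset.sum_congr rfl fun j _ => integral_const_mul _ _
  -- diagonal bound
  have hdiag : ∀ j, I j j ≤ c + B * n ^ d / (Nj j) := by
    intro j
    have : I j j = ∫ ω, ‖g j ω - f‖ ^ 2 ∂P := by
      refine integral_congr_ae (Filter.Eventually.of_forall fun ω => ?_)
      exact real_inner_self_eq_norm_sq _
    rw [this]; exact hvar j
  -- off-diagonal bound
  have hoff : ∀ i j, i ≠ j → I i j ≤ c := by
    intro i j hij
    have hφ : Measurable fun x : H => x - f :=
      (continuous_id.sub continuous_const).measurable
    have hindep : IndepFun (X i) (X j) P :=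
      (hgindep.indepFun hij).comp hφ hφ
    have hIij : I i j = ⟪∫ ω, X i ω ∂P, ∫ ω, X j ω ∂P⟫ :=
      indep_integral_inner hindep (hX1 i) (hX1 j)
    have hbi : ‖∫ ω, X i ω ∂P‖ ^ 2 ≤ c := by rw [hmean i]; exact hbias i
    have hbj : ‖∫ ω, X j ω ∂P‖ ^ 2 ≤ c := by rw [hmean j]; exact hbias j
    have hle := real_inner_le_norm (∫ ω, X i ω ∂P) (∫ ω, X j ω ∂P)
    rw [hIij]
    nlinarith [norm_nonneg (∫ ω, X i ω ∂P), norm_nonneg (∫ ω, X j ω ∂P),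
      sq_nonneg (‖∫ ω, X i ω ∂P‖ - ‖∫ ω, X j ω ∂P‖)]
  -- termwise bound
  have hterm : ∀ i j, (w i * w j) * I i j ≤
      (w i * w j) * c + (if i = j then (w j * w j) * (B * n ^ d / (Nj j)) else 0) := by
    intro i j
    by_cases hij : i = j
    · subst hij
      rw [if_pos rfl]
      have h2 := mul_le_mul_of_nonneg_left (hdiag i) (mul_nonneg (hw_nonneg i) (hw_nonneg i))
      rw [mul_add] at h2
      linarith [h2]
    · simp only [if_neg hij, add_zero]
      exact mul_le_mul_of_nonneg_left (hoff i j hij) (mul_nonneg (hw_nonneg i) (hw_nonneg j))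
  -- summing up
  have hsum1 : ∑ i, ∑ j, (w i * w j) * c = c := by
    calc ∑ i, ∑ j, (w i * w j) * c = ∑ i, w i * ∑ j, w j * c := by
          refine Finset.sum_congr rfl fun i _ => ?_
          rw [Finset.mul_sum]
          exact Finset.sum_congr rfl fun j _ => by ring
      _ = ∑ i, w i * c := by rw [← Finset.sum_mul, hw_sum, one_mul]
      _ = c := by rw [← Finset.sum_mul, hw_sum, one_mul]
  have hsum2 : ∑ j, (w j * w j) * (B * n ^ d / (Nj j)) = B * n ^ d / N := by
    have : ∀ j : Fin m, (w j * w j) * (B * n ^ d / (Nj j)) = B * n ^ d / (N:ℝ)^2 * (Nj j) := by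
      intro j
      have hj : (Nj j : ℝ) ≠ 0 := by
        have : (0:ℝ) < Nj j := by exact_mod_cast hNj j
        exact this.ne'
      rw [hw_def]
      field_simp
    rw [Finset.sum_congr rfl (fun j _ => this j), ← Finset.mul_sum,
      show ∑ j, (Nj j : ℝ) = (N : ℝ) by rw [hN_def]; push_cast; ring]
    field_simp
  have htotal : ∫ ω, ‖(∑ j, w j • g j ω) - f‖ ^ 2 ∂P ≤ c + B * n ^ d / N := by
    rw [hexp]
    calc ∑ i, ∑ j, (w i * w j) * I i j
        ≤ ∑ i, ∑ j, ((w i * w j) * c +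
            (if i = j then (w j * w j) * (B * n ^ d / (Nj j)) else 0)) :=
          Finset.sum_le_sum fun i _ => Finset.sum_le_sum fun j _ => hterm i j
      _ = c + B * n ^ d / N := by
          simp only [Finset.sum_add_distrib]
          rw [hsum1]
          congr 1
          rw [show ∑ i, ∑ j, (if i = j then (w j * w j) * (B * n ^ d / (Nj j)) else 0)
              = ∑ j, (w j * w j) * (B * n ^ d / (Nj j)) from
            Finset.sum_congr rfl (fun i _ => by
              rw [Finset.sum_ite_eq]; simp) , hsum2]
  -- final rate computation
  set t : ℝ := (N : ℝ) ^ (-(2 * r) / (2 * r + d)) with ht_def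
  have ht_nonneg : 0 ≤ t := (Real.rpow_pos_of_pos hNpos _).le
  have h1 : n ^ (-(2 * r)) ≤ a ^ (-(2 * r)) * t := by
    have hle : a * (N : ℝ) ^ ((1 : ℝ) / (2 * r + d)) ≤ n := hnlow
    have := Real.rpow_le_rpow_of_nonpos (by positivity) hle (by linarith : -(2 * r) ≤ 0)
    calc n ^ (-(2 * r)) ≤ (a * (N : ℝ) ^ ((1 : ℝ) / (2 * r + d))) ^ (-(2 * r)) := this
      _ = a ^ (-(2 * r)) * t := by
          rw [Real.mul_rpow ha.le hupos.le, ht_def, ← Real.rpow_mul hNpos.le]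
          congr 2
          field_simp
  have h2 : n ^ d / N ≤ b ^ d * t := by
    have hub : n ^ d ≤ (b * (N : ℝ) ^ ((1 : ℝ) / (2 * r + d))) ^ d :=
      pow_le_pow_left₀ hn_pos.le hnhigh d
    have hud : ((N : ℝ) ^ ((1 : ℝ) / (2 * r + d))) ^ d = (N : ℝ) ^ ((d : ℝ) / (2 * r + d)) := by
      rw [← Real.rpow_natCast ((N : ℝ) ^ ((1 : ℝ) / (2 * r + d))) d,
        ← Real.rpow_mul hNpos.le]
      congr 1
      field_simp
    have hdiv : (N : ℝ) ^ ((d : ℝ) / (2 * r + d)) / N = t := by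
      rw [ht_def, show (-(2 * r) / (2 * r + d)) = (d : ℝ) / (2 * r + d) - 1 by
        field_simp; ring, Real.rpow_sub hNpos, Real.rpow_one]
    calc n ^ d / N ≤ (b * (N : ℝ) ^ ((1 : ℝ) / (2 * r + d))) ^ d / N :=
          div_le_div_of_nonneg_right hub hNpos.le
      _ = b ^ d * t := by
          rw [mul_pow, hud, mul_div_assoc, hdiv]
  have hfinal : c + B * n ^ d / N ≤ (2 * A * a ^ (-(2 * r)) + B * b ^ d) * t := by
    have ha2 : 0 ≤ a ^ (-(2 * r)) := (Real.rpow_pos_of_pos ha _).le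
    have e1 : c ≤ A * (a ^ (-(2 * r)) * t) := by
      rw [hc_def]; exact mul_le_mul_of_nonneg_left h1 hA
    have e2 : B * n ^ d / N ≤ B * (b ^ d * t) := by
      rw [mul_div_assoc]
      exact mul_le_mul_of_nonneg_left h2 hB
    nlinarith [mul_nonneg hA (mul_nonneg ha2 ht_nonneg)]
  calc ∫ ω, ‖(∑ j, w j • g j ω) - f‖ ^ 2 ∂P ≤ c + B * n ^ d / N := htotal
    _ ≤ (2 * A * a ^ (-(2 * r)) + B * b ^ d) * t := hfinal
end
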